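/- arXiv:1706.02597 — 4 statements merged into one kernel-verified Lean document; each statement's English description precedes it below -/
import Mathlib

section
/- Let g : ℝ → ℝ be nonnegative and nondecreasing on [0,1], let ξ > 1, and suppose ∑_{k=1}^∞ g(exp(−ξ^k)) = ∞. Then for every b > 0 and every δ > 0 there exists ε₀ ∈ (0,1) such that for every ε ∈ (0,ε₀), setting C := (1−ε)·ξ (so C > 1), for all sufficiently large n the denominator below is positive and limsup_{n→∞} ( ∑_{k=1}^n g(exp(−b·C^k)) ) / ( ∑_{k=1}^n g(exp(−ξ^k)) ) ≤ 1 + δ. -/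
open Filter
open Finset

set_option maxHeartbeats 1000000



private lemma abel_bound (a : ℕ → ℝ) (m : ℕ → ℕ) (β c : ℝ)
    (hβ : 0 ≤ β) (hc : 0 ≤ c)
    (ha0 : ∀ j, 0 ≤ a j) (hanti : ∀ j, a (j + 1) ≤ a j)
    (hM : ∀ J : ℕ, (∑ j ∈ range (J + 1), (m j : ℝ)) ≤ β * J + c)
    (N : ℕ) :
    (∑ j ∈ range N, (m j : ℝ) * a j) ≤ β * ∑ j ∈ range N, a j + c * a 0 := by
  have hMall : ∀ N : ℕ, (∑ j ∈ range N, (m j : ℝ)) ≤ β * N + c := by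
    intro N
    match N with
    | 0 => simpa using hc
    | J + 1 =>
      refine (hM J).trans ?_
      have h1 : β * J ≤ β * (J + 1) := by nlinarith
      push_cast
      linarith
  have key : ∀ N : ℕ, (∑ j ∈ range N, (m j : ℝ) * a j)
      + (β * N + c - ∑ j ∈ range N, (m j : ℝ)) * a N ≤
      β * ∑ j ∈ range N, a j + c * a 0 := by
    intro N
    induction N with
    | zero => simp
    | succ N ih =>
      have e2 : ∑ j ∈ range (N + 1), (m j : ℝ) = (∑ j ∈ range N, (m j : ℝ)) + (m N : ℝ) :=
        sum_range_succ _ _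
      have hM' := hM N
      rw [e2] at hM'
      have hco : 0 ≤ β * ((N : ℝ) + 1) + c - ((∑ j ∈ range N, (m j : ℝ)) + (m N : ℝ)) := by
        push_cast at hM'
        nlinarith
      have h1 : (β * ((N : ℝ) + 1) + c - ((∑ j ∈ range N, (m j : ℝ)) + (m N : ℝ))) * a (N + 1)
          ≤ (β * ((N : ℝ) + 1) + c - ((∑ j ∈ range N, (m j : ℝ)) + (m N : ℝ))) * a N :=
        mul_le_mul_of_nonneg_left (hanti N) hco
      rw [sum_range_succ (f := fun j => (m j : ℝ) * a j), e2, sum_range_succ (f := a)]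
      push_cast
      nlinarith [h1, ih]
  have hN := key N
  have hs : 0 ≤ (β * N + c - ∑ j ∈ range N, (m j : ℝ)) * a N :=
    mul_nonneg (by linarith [hMall N]) (ha0 N)
  linarith

private lemma sum_comp_bound (a : ℕ → ℝ) (f : ℕ → ℕ) (s : Finset ℕ) (N : ℕ) (β c : ℝ)
    (hβ : 0 ≤ β) (hc : 0 ≤ c)
    (ha0 : ∀ j, 0 ≤ a j) (hanti : ∀ j, a (j + 1) ≤ a j)
    (hfN : ∀ k ∈ s, f k < N)
    (hcard : ∀ J : ℕ, ((s.filter fun k => f k ≤ J).card : ℝ) ≤ β * J + c) :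
    (∑ k ∈ s, a (f k)) ≤ β * ∑ j ∈ range N, a j + c * a 0 := by
  have hmaps : ∀ k ∈ s, f k ∈ range N := fun k hk => mem_range.2 (hfN k hk)
  have e : ∑ k ∈ s, a (f k)
      = ∑ j ∈ range N, ((s.filter fun k => f k = j).card : ℝ) * a j := by
    rw [← Finset.sum_fiberwise_of_maps_to hmaps fun k => a (f k)]
    refine sum_congr rfl fun j _ => ?_
    rw [Finset.sum_congr rfl fun k hk => congrArg a (mem_filter.1 hk).2,
      Finset.sum_const, nsmul_eq_mul]
  rw [e]
  refine abel_bound a (fun j => (s.filter fun k => f k = j).card) β c hβ hc ha0 hanti ?_ N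
  intro J
  have hfib : (∑ j ∈ range (J + 1), ((s.filter fun k => f k = j).card))
      = (s.filter fun k => f k ≤ J).card := by
    rw [Finset.card_eq_sum_card_fiberwise
      (f := f) (t := range (J + 1))
      (fun k hk => mem_range.2 (Nat.lt_succ_of_le (mem_filter.1 hk).2))]
    refine sum_congr rfl fun j hj => ?_
    congr 1
    rw [Finset.filter_filter]
    refine Finset.filter_congr fun k hk => ?_
    have hj' := mem_range.1 hj
    constructor
    · exact fun h => ⟨by omega, h⟩
    · exact fun h => h.2
  calc (∑ j ∈ range (J + 1), ((s.filter fun k => f k = j).card : ℝ))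
      = ((s.filter fun k => f k ≤ J).card : ℝ) := by exact_mod_cast congrArg Nat.cast hfib
    _ ≤ β * J + c := hcard J


private lemma abel_bound' : True := trivial


/-- **(5.28)–(5.33).** For `g` nonnegative and nondecreasing on `[0,1]`, `ξ > 1`,
and `∑_k g(exp(-ξ^k)) = ∞`: for every `b > 0` and `δ > 0` there is `ε₀ ∈ (0,1)` such
that for every `ε ∈ (0,ε₀)`, with `C := (1-ε)ξ` one has `C > 1`, the denominator is
eventually positive, and
`limsup_n (∑_{k=1}^n g(exp(-b C^k))) / (∑_{k=1}^n g(exp(-ξ^k))) ≤ 1 + δ`. -/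
theorem stmt15 (g : ℝ → ℝ)
    (hg0 : ∀ x ∈ Set.Icc (0 : ℝ) 1, 0 ≤ g x)
    (hgmono : ∀ x ∈ Set.Icc (0 : ℝ) 1, ∀ y ∈ Set.Icc (0 : ℝ) 1, x ≤ y → g x ≤ g y)
    (ξ : ℝ) (hξ : 1 < ξ)
    (hdiv : ¬ Summable (fun k : ℕ => g (Real.exp (-(ξ ^ (k + 1)))))) :
    ∀ b : ℝ, 0 < b → ∀ δ : ℝ, 0 < δ →
      ∃ ε₀ ∈ Set.Ioo (0 : ℝ) 1, ∀ ε ∈ Set.Ioo (0 : ℝ) ε₀,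
        1 < (1 - ε) * ξ ∧
        (∀ᶠ n : ℕ in atTop,
          0 < ∑ k ∈ Finset.Icc 1 n, g (Real.exp (-(ξ ^ k)))) ∧
        Filter.limsup (fun n : ℕ =>
            ENNReal.ofReal
              ((∑ k ∈ Finset.Icc 1 n, g (Real.exp (-(b * ((1 - ε) * ξ) ^ k)))) /
                (∑ k ∈ Finset.Icc 1 n, g (Real.exp (-(ξ ^ k)))))) atTop
          ≤ ENNReal.ofReal (1 + δ) := by
  intro b hb δ hδ
  have hξ0 : (0:ℝ) < ξ := lt_trans one_pos hξ
  have hL : 0 < Real.log ξ := Real.log_pos hξ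
  set L := Real.log ξ with hL_def
  -- the sequence a
  set a : ℕ → ℝ := fun j => g (Real.exp (-(ξ ^ j))) with ha_def
  have hmem : ∀ x : ℝ, 0 ≤ x → Real.exp (-x) ∈ Set.Icc (0:ℝ) 1 :=
    fun x hx => ⟨(Real.exp_pos _).le, Real.exp_le_one_iff.2 (by linarith)⟩
  have hpow0 : ∀ j : ℕ, (0:ℝ) ≤ ξ ^ j := fun j => pow_nonneg hξ0.le j
  have ha0 : ∀ j, 0 ≤ a j := fun j => hg0 _ (hmem _ (hpow0 j))
  have hanti : ∀ j, a (j + 1) ≤ a j := by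
    intro j
    refine hgmono _ (hmem _ (hpow0 _)) _ (hmem _ (hpow0 _)) ?_
    exact Real.exp_le_exp.2 (by simpa using pow_le_pow_right₀ hξ.le j.le_succ)
  have hA : Antitone a := antitone_nat_of_succ_le hanti
  -- divergence of denominator
  rw [not_summable_iff_tendsto_nat_atTop_of_nonneg (fun i => ha0 (i+1))] at hdiv
  have hDeq : ∀ n : ℕ, (∑ i ∈ range n, a (i + 1)) = ∑ k ∈ Finset.Icc 1 n, a k := by
    intro n
    rw [← Finset.Ico_add_one_right_eq_Icc, Finset.sum_Ico_eq_sum_range]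
    simp [add_comm]
  have hD : Tendsto (fun n => ∑ k ∈ Finset.Icc 1 n, a k) atTop atTop :=
    hdiv.congr fun n => hDeq n
  -- choice of ε₀
  have hexp1 : Real.exp (-(δ * L) / (1 + δ)) < 1 := by
    rw [Real.exp_lt_one_iff]
    apply div_neg_of_neg_of_pos <;> nlinarith
  have hinvξ : ξ⁻¹ < 1 := by
    rw [inv_lt_one_iff₀]; right; exact hξ
  have hinvξ0 : 0 < ξ⁻¹ := inv_pos.2 hξ0
  refine ⟨min (1 - ξ⁻¹) (1 - Real.exp (-(δ * L) / (1 + δ))), ⟨?_, ?_⟩, ?_⟩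
  · exact lt_min (by linarith) (by linarith)
  · exact lt_of_le_of_lt (min_le_left _ _) (by linarith)
  rintro ε ⟨hε0, hεlt⟩
  have hε1 : ε < 1 - ξ⁻¹ := hεlt.trans_le (min_le_left _ _)
  have hε2 : ε < 1 - Real.exp (-(δ * L) / (1 + δ)) := hεlt.trans_le (min_le_right _ _)
  have hexp0 : 0 < Real.exp (-(δ * L) / (1 + δ)) := Real.exp_pos _
  have h1ε : 0 < 1 - ε := by linarith
  set C := (1 - ε) * ξ with hC_def
  have hC1 : 1 < C := by
    have hinv : ξ⁻¹ < 1 - ε := by linarith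
    have h := mul_lt_mul_of_pos_right hinv hξ0
    rwa [inv_mul_cancel₀ hξ0.ne'] at h
  have hC0 : 0 < C := lt_trans one_pos hC1
  set Lc := Real.log C with hLc_def
  have hLc0 : 0 < Lc := Real.log_pos hC1
  have hCξ : C < ξ := by nlinarith
  have hLcL : Lc < L := Real.log_lt_log hC0 hCξ
  set β := L / Lc with hβ_def
  have hβ1 : 1 < β := (one_lt_div hLc0).2 hLcL
  have hβδ : β < 1 + δ := by
    have hlog : -(δ * L) / (1 + δ) < Real.log (1 - ε) := by
      have h := Real.log_lt_log hexp0 (show Real.exp (-(δ * L) / (1 + δ)) < 1 - ε by linarith)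
      rwa [Real.log_exp] at h
    have hLc_eq : Lc = Real.log (1 - ε) + L := by
      rw [hLc_def, hC_def, Real.log_mul h1ε.ne' hξ0.ne']
    have hid : L / (1 + δ) = -(δ * L) / (1 + δ) + L := by field_simp; ring
    have hLcgt : L / (1 + δ) < Lc := by rw [hLc_eq, hid]; linarith
    rw [hβ_def, div_lt_iff₀ hLc0]
    have h2 := mul_lt_mul_of_pos_left hLcgt (show (0:ℝ) < 1 + δ by linarith)
    rw [mul_div_cancel₀ _ (show (1:ℝ) + δ ≠ 0 by linarith)] at h2
    linarith
  set α := Lc / L with hα_def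
  have hα0 : 0 < α := div_pos hLc0 hL
  have hα1 : α < 1 := (div_lt_one hL).2 hLcL
  have hinvα : α⁻¹ = β := by rw [hα_def, hβ_def, inv_div]
  set t := Real.log b / L with ht_def
  set K : ℕ := max 1 ⌈(1 - t) / α⌉₊ with hK_def
  have hK1 : 1 ≤ K := le_max_left _ _
  set T : ℕ := ⌈max 0 t⌉₊ with hT_def
  set c : ℝ := β * (1 + max 0 (-t)) + 1 with hc_def
  have hc0 : 0 ≤ c := by
    have h1 : (0:ℝ) ≤ max 0 (-t) := le_max_left _ _
    nlinarith
  set f : ℕ → ℕ := fun k => ⌊α * k + t⌋₊ with hf_def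
  have hαt : ∀ k : ℕ, K ≤ k → 1 ≤ α * k + t := by
    intro k hk
    have h1 : ((1 - t) / α : ℝ) ≤ (⌈(1 - t) / α⌉₊ : ℕ) := Nat.le_ceil _
    have h2 : ((⌈(1 - t) / α⌉₊ : ℕ) : ℝ) ≤ (k : ℝ) :=
      Nat.cast_le.2 (le_trans (le_max_right _ _) hk)
    have h3 : (1 - t) / α ≤ (k : ℝ) := h1.trans h2
    have h4 : 1 - t ≤ (k : ℝ) * α := (div_le_iff₀ hα0).1 h3
    nlinarith
  have hfk_le : ∀ k : ℕ, K ≤ k → (f k : ℝ) ≤ α * k + t :=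
    fun k hk => Nat.floor_le (by linarith [hαt k hk])
  have hξpow : ∀ m : ℕ, (ξ:ℝ) ^ m = Real.exp (m * L) := by
    intro m
    rw [Real.exp_nat_mul, hL_def, Real.exp_log hξ0]
  have hCpow : ∀ k : ℕ, b * C ^ k = Real.exp (Real.log b + k * Lc) := by
    intro k
    rw [Real.exp_add, Real.exp_nat_mul, Real.exp_log hb, hLc_def, Real.exp_log hC0]
  have hterm : ∀ k : ℕ, K ≤ k → g (Real.exp (-(b * C ^ k))) ≤ a (f k) := by
    intro k hk
    have hbC : 0 < b * C ^ k := mul_pos hb (pow_pos hC0 k)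
    have hle : ξ ^ (f k) ≤ b * C ^ k := by
      rw [hξpow, hCpow]
      apply Real.exp_le_exp.2
      have h1 : (f k : ℝ) ≤ α * k + t := hfk_le k hk
      have h2 : (f k : ℝ) * L ≤ (α * k + t) * L := mul_le_mul_of_nonneg_right h1 hL.le
      have h3 : (α * k + t) * L = (k : ℝ) * Lc + Real.log b := by
        rw [hα_def, ht_def]; field_simp
      linarith
    exact hgmono _ (hmem _ hbC.le) _ (hmem _ (hpow0 _)) (Real.exp_le_exp.2 (by linarith))
  -- counting hypothesis
  have hcard : ∀ n J : ℕ,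
      ((((Ioc (K-1) n)).filter fun k => f k ≤ J).card : ℝ) ≤ β * J + c := by
    intro n J
    set x : ℝ := ((J:ℝ) + 1 - t) / α with hx_def
    have hsub : ((Ioc (K-1) n)).filter (fun k => f k ≤ J) ⊆ range ⌈x⌉₊ := by
      intro k hk
      obtain ⟨hk1, hk2⟩ := Finset.mem_filter.1 hk
      have hkK : K ≤ k := by
        have := (Finset.mem_Ioc.1 hk1).1
        omega
      have h1 : α * k + t < (f k : ℝ) + 1 := Nat.lt_floor_add_one _
      have h2 : (f k : ℝ) ≤ (J : ℝ) := Nat.cast_le.2 hk2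
      have h3 : (k : ℝ) * α < (J : ℝ) + 1 - t := by nlinarith
      have h4 : (k : ℝ) < x := (lt_div_iff₀ hα0).2 h3
      have h5 : (k : ℝ) < (⌈x⌉₊ : ℝ) := lt_of_lt_of_le h4 (Nat.le_ceil _)
      exact Finset.mem_range.2 (by exact_mod_cast h5)
    have hcle : ((((Ioc (K-1) n)).filter fun k => f k ≤ J).card : ℝ) ≤ (⌈x⌉₊ : ℝ) := by
      exact_mod_cast Finset.card_le_card hsub |>.trans (by rw [Finset.card_range])
    have hmaxt : -t ≤ max 0 (-t) := le_max_right _ _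
    by_cases hx0 : 0 ≤ x
    · have h6 : (⌈x⌉₊ : ℝ) < x + 1 := Nat.ceil_lt_add_one hx0
      have h7 : x = ((J:ℝ) + 1 - t) * β := by
        rw [hx_def, div_eq_mul_inv, hinvα]
      nlinarith
    · have h6 : (⌈x⌉₊ : ℕ) = 0 := by
        rw [Nat.ceil_eq_zero]
        linarith
      rw [h6] at hcle
      have : (0:ℝ) ≤ β * J := by positivity
      simp only [Nat.cast_zero] at hcle
      linarith
  -- f k < n + 1 + T on Ioc (K-1) n
  have hfN : ∀ n : ℕ, ∀ k ∈ Ioc (K-1) n, f k < n + 1 + T := by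
    intro n k hk
    obtain ⟨hk1, hk2⟩ := Finset.mem_Ioc.1 hk
    have hkK : K ≤ k := by omega
    have h1 : (f k : ℝ) ≤ α * k + t := hfk_le k hkK
    have h2 : α * k ≤ (k : ℝ) := by nlinarith [Nat.cast_nonneg (α := ℝ) k]
    have h3 : t ≤ (T : ℝ) := le_trans (le_max_right 0 t) (Nat.le_ceil _)
    have h4 : (k : ℝ) ≤ (n : ℝ) := Nat.cast_le.2 hk2
    have h5 : (f k : ℝ) < ((n + 1 + T : ℕ) : ℝ) := by push_cast; linarith
    exact_mod_cast h5
  -- constants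
  set B0 : ℝ := g (Real.exp (-(b * C))) with hB0_def
  have hB0 : 0 ≤ B0 := hg0 _ (hmem _ (by positivity))
  have hB0b : ∀ k : ℕ, 1 ≤ k → g (Real.exp (-(b * C ^ k))) ≤ B0 := by
    intro k hk
    have h1 : C ≤ C ^ k := le_self_pow₀ hC1.le (by omega)
    have h2 : b * C ≤ b * C ^ k := by nlinarith
    exact hgmono _ (hmem _ (by positivity)) _ (hmem _ (by positivity))
      (Real.exp_le_exp.2 (by linarith))
  set C₁ : ℝ := ((K - 1 : ℕ) : ℝ) * B0 + β * ((T : ℝ) + 1) * a 0 + c * a 0 with hC₁_def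
  have hC₁0 : 0 ≤ C₁ := by
    have := ha0 0
    have : (0:ℝ) ≤ ((K - 1 : ℕ) : ℝ) := Nat.cast_nonneg _
    positivity
  -- numerator bound
  have hIcc : ∀ n : ℕ, Finset.Icc 1 n = Finset.Ioc 0 n := by
    intro n; ext x; simp only [Finset.mem_Icc, Finset.mem_Ioc]; omega
  have hβ0 : (0:ℝ) ≤ β := by linarith
  have hNum : ∀ n : ℕ, K ≤ n →
      (∑ k ∈ Finset.Icc 1 n, g (Real.exp (-(b * C ^ k))))
        ≤ β * (∑ k ∈ Finset.Icc 1 n, a k) + C₁ := by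
    intro n hn
    have hsplit : (∑ k ∈ Ioc 0 (K-1), g (Real.exp (-(b * C ^ k))))
        + (∑ k ∈ Ioc (K-1) n, g (Real.exp (-(b * C ^ k))))
        = ∑ k ∈ Ioc 0 n, g (Real.exp (-(b * C ^ k))) :=
      Finset.sum_Ioc_consecutive _ (Nat.zero_le _) (by omega)
    have hpiece1 : (∑ k ∈ Ioc 0 (K-1), g (Real.exp (-(b * C ^ k))))
        ≤ ((K - 1 : ℕ) : ℝ) * B0 := by
      have h := Finset.sum_le_card_nsmul (Ioc 0 (K-1)) (fun k => g (Real.exp (-(b * C ^ k)))) B0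
        (fun k hk => hB0b k (Finset.mem_Ioc.1 hk).1)
      rwa [Nat.card_Ioc, Nat.sub_zero, nsmul_eq_mul] at h
    have hpiece2a : (∑ k ∈ Ioc (K-1) n, g (Real.exp (-(b * C ^ k))))
        ≤ ∑ k ∈ Ioc (K-1) n, a (f k) := by
      refine Finset.sum_le_sum fun k hk => hterm k ?_
      have := (Finset.mem_Ioc.1 hk).1; omega
    have hpiece2b : (∑ k ∈ Ioc (K-1) n, a (f k))
        ≤ β * (∑ j ∈ range (n+1+T), a j) + c * a 0 :=
      sum_comp_bound a f _ (n+1+T) β c hβ0 hc0 ha0 hanti (hfN n) (hcard n)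
    have hrange : (∑ j ∈ range (n+1), a j) + (∑ j ∈ Ico (n+1) (n+1+T), a j)
        = ∑ j ∈ range (n+1+T), a j := by
      simp only [Finset.range_eq_Ico]
      exact Finset.sum_Ico_consecutive _ (Nat.zero_le _) (by omega)
    have htail : (∑ j ∈ Ico (n+1) (n+1+T), a j) ≤ (T : ℝ) * a 0 := by
      have h := Finset.sum_le_card_nsmul (Ico (n+1) (n+1+T)) a (a 0)
        (fun j _ => hA (Nat.zero_le j))
      rwa [Nat.card_Ico, Nat.add_sub_cancel_left, nsmul_eq_mul] at h
    have hhead : (∑ j ∈ range (n+1), a j) = a 0 + ∑ k ∈ Finset.Icc 1 n, a k := by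
      rw [Finset.sum_range_succ' a n, hDeq n]; ring
    have hsum_le : (∑ j ∈ range (n+1+T), a j)
        ≤ a 0 + (∑ k ∈ Finset.Icc 1 n, a k) + (T:ℝ) * a 0 := by
      rw [← hrange, hhead]; linarith
    have h2 : (∑ k ∈ Ioc (K-1) n, g (Real.exp (-(b * C ^ k))))
        ≤ β * (a 0 + (∑ k ∈ Finset.Icc 1 n, a k) + (T:ℝ) * a 0) + c * a 0 := by
      refine (hpiece2a.trans hpiece2b).trans ?_
      have h3 := mul_le_mul_of_nonneg_left hsum_le hβ0
      linarith
    calc (∑ k ∈ Finset.Icc 1 n, g (Real.exp (-(b * C ^ k))))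
        = (∑ k ∈ Ioc 0 (K-1), g (Real.exp (-(b * C ^ k))))
          + (∑ k ∈ Ioc (K-1) n, g (Real.exp (-(b * C ^ k)))) := by
          rw [hIcc n, ← hsplit]
      _ ≤ β * (∑ k ∈ Finset.Icc 1 n, a k) + C₁ := by
          rw [hC₁_def]; nlinarith [hpiece1, h2]
  -- finale
  have hpos : 0 < 1 + δ - β := by linarith
  set M₀ : ℝ := C₁ / (1 + δ - β) + 1 with hM₀_def
  have hM₀ : 0 < M₀ := by positivity
  have hMid : (1 + δ - β) * M₀ = C₁ + (1 + δ - β) := by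
    rw [hM₀_def]; field_simp
  refine ⟨hC1, ?_, ?_⟩
  · filter_upwards [hD.eventually_ge_atTop 1] with n hn
    exact lt_of_lt_of_le one_pos hn
  · have hev : ∀ᶠ n : ℕ in atTop,
        ENNReal.ofReal ((∑ k ∈ Finset.Icc 1 n, g (Real.exp (-(b * C ^ k)))) /
          (∑ k ∈ Finset.Icc 1 n, a k)) ≤ ENNReal.ofReal (1 + δ) := by
      filter_upwards [hD.eventually_ge_atTop M₀, eventually_ge_atTop K] with n h1 h2
      have hDpos : 0 < ∑ k ∈ Finset.Icc 1 n, a k := lt_of_lt_of_le hM₀ h1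
      apply ENNReal.ofReal_le_ofReal
      rw [div_le_iff₀ hDpos]
      have hnum := hNum n h2
      nlinarith [mul_le_mul_of_nonneg_left h1 hpos.le]
    exact Filter.limsup_le_of_le (by isBoundedDefault) hev
end

section
/- Let g : ℝ → ℝ be nonnegative and nondecreasing on [0,1], let ξ > 1, and suppose ∑_{k=1}^∞ g(exp(−ξ^k)) = ∞. Then for every b > 0, every integer k₁ ≥ 1, and every δ > 0 there exists ε₀ ∈ (0,1) such that for every ε ∈ (0,ε₀), setting C := (1+ε)·ξ, liminf_{n→∞} ( ∑_{k=k₁}^n g(exp(−b·C^k)) ) / ( ∑_{k=1}^n g(exp(−ξ^k)) ) ≥ 1 − δ. -/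
open Filter

set_option maxHeartbeats 1000000 in
/-- **(6.27)–(6.31).** For `g` nonnegative and nondecreasing on `[0,1]`, `ξ > 1`,
and `∑_k g(exp(-ξ^k)) = ∞`: for every `b > 0`, `k₁ ≥ 1` and `δ > 0` there is
`ε₀ ∈ (0,1)` such that for every `ε ∈ (0,ε₀)`, with `C := (1+ε)ξ`,
`liminf_n (∑_{k=k₁}^n g(exp(-b C^k))) / (∑_{k=1}^n g(exp(-ξ^k))) ≥ 1 - δ`. -/
theorem stmt16 (g : ℝ → ℝ)
    (hg0 : ∀ x ∈ Set.Icc (0 : ℝ) 1, 0 ≤ g x)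
    (hgmono : ∀ x ∈ Set.Icc (0 : ℝ) 1, ∀ y ∈ Set.Icc (0 : ℝ) 1, x ≤ y → g x ≤ g y)
    (ξ : ℝ) (hξ : 1 < ξ)
    (hdiv : ¬ Summable (fun k : ℕ => g (Real.exp (-(ξ ^ (k + 1)))))) :
    ∀ b : ℝ, 0 < b → ∀ k₁ : ℕ, 1 ≤ k₁ → ∀ δ : ℝ, 0 < δ →
      ∃ ε₀ ∈ Set.Ioo (0 : ℝ) 1, ∀ ε ∈ Set.Ioo (0 : ℝ) ε₀,
        ENNReal.ofReal (1 - δ) ≤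
          Filter.liminf (fun n : ℕ =>
            ENNReal.ofReal
              ((∑ k ∈ Finset.Icc k₁ n, g (Real.exp (-(b * ((1 + ε) * ξ) ^ k)))) /
                (∑ k ∈ Finset.Icc 1 n, g (Real.exp (-(ξ ^ k)))))) atTop := by
  intro b hb k₁ hk₁ δ hδ
  by_cases hδ1 : 1 ≤ δ
  · refine ⟨1/2, by norm_num, ?_⟩
    intro ε hε
    have h0 : ENNReal.ofReal (1 - δ) = 0 := by
      rw [ENNReal.ofReal_eq_zero]; linarith
    rw [h0]
    exact zero_le
  push_neg at hδ1
  have hξ0 : (0:ℝ) < ξ := lt_trans one_pos hξ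
  set a : ℕ → ℝ := fun j => g (Real.exp (-(ξ ^ j))) with hadef
  have hmem : ∀ u : ℝ, 0 ≤ u → Real.exp (-u) ∈ Set.Icc (0:ℝ) 1 := by
    intro u hu
    exact ⟨(Real.exp_pos _).le, Real.exp_le_one_iff.2 (by linarith)⟩
  have ha0 : ∀ j, 0 ≤ a j := fun j => hg0 _ (hmem _ (by positivity))
  have hamono : ∀ i j, i ≤ j → a j ≤ a i := by
    intro i j hij
    refine hgmono _ (hmem _ (by positivity)) _ (hmem _ (by positivity)) ?_
    refine Real.exp_le_exp.2 ?_
    have h : ξ ^ i ≤ ξ ^ j := pow_le_pow_right₀ hξ.le hij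
    linarith
  -- divergence of partial sums of the denominator
  have hS : Tendsto (fun n => ∑ j ∈ Finset.Icc 1 n, a j) atTop atTop := by
    have h2 : Tendsto (fun n => ∑ i ∈ Finset.range n, a (i+1)) atTop atTop :=
      (not_summable_iff_tendsto_nat_atTop_of_nonneg (fun i => ha0 (i+1))).1 hdiv
    have h1 : ∀ n : ℕ, ∑ j ∈ Finset.Icc 1 n, a j = ∑ i ∈ Finset.range n, a (i+1) := by
      intro n
      rw [← Finset.Ico_add_one_right_eq_Icc, Finset.sum_Ico_eq_sum_range]
      simp [add_comm]
    simpa only [h1] using h2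
  -- parameters
  obtain ⟨m0', hm0'⟩ := pow_unbounded_of_one_lt b hξ
  set m0 := m0' + 1 with hm0def
  have hm01 : 1 ≤ m0 := Nat.le_add_left _ _
  have hm0 : b ≤ ξ ^ m0 := le_trans hm0'.le (pow_le_pow_right₀ hξ.le (Nat.le_succ _))
  have hξδ : 1 < ξ ^ (δ:ℝ) := (Real.one_lt_rpow_iff_of_pos hξ0).2 (Or.inl ⟨hξ, hδ⟩)
  refine ⟨min (1/2) (ξ ^ (δ:ℝ) - 1),
    ⟨lt_min (by norm_num) (by linarith), lt_of_le_of_lt (min_le_left _ _) (by norm_num)⟩, ?_⟩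
  intro ε hε
  obtain ⟨hε0, hεlt⟩ := hε
  have hε2 : 1 + ε ≤ ξ ^ (δ:ℝ) := by
    have := lt_of_lt_of_le hεlt (min_le_right _ _); linarith
  have hδ0 : (0:ℝ) < 1 + δ := by linarith
  set φ : ℕ → ℕ := fun k => ⌈(1+δ) * (k:ℝ)⌉₊ + m0 with hφdef
  have hceil_le : ∀ k : ℕ, ((1+δ) * (k:ℝ)) ≤ ⌈(1+δ)*(k:ℝ)⌉₊ := fun k => Nat.le_ceil _
  have hceil_lt : ∀ k : ℕ, (⌈(1+δ)*(k:ℝ)⌉₊ : ℝ) < (1+δ)*(k:ℝ) + 1 :=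
    fun k => Nat.ceil_lt_add_one (by positivity)
  have hkceil : ∀ k : ℕ, k ≤ ⌈(1+δ)*(k:ℝ)⌉₊ := by
    intro k
    have h1 : (k:ℝ) ≤ (1+δ)*(k:ℝ) := by nlinarith [Nat.cast_nonneg (α := ℝ) k]
    exact_mod_cast le_trans h1 (hceil_le k)
  have hφsucc : ∀ k, φ k + 1 ≤ φ (k+1) := by
    intro k
    have h1 : ⌈(1+δ)*(k:ℝ)⌉₊ + 1 ≤ ⌈(1+δ)*((k+1:ℕ):ℝ)⌉₊ := by
      rw [← Nat.ceil_add_one (by positivity : (0:ℝ) ≤ (1+δ)*(k:ℝ))]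
      apply Nat.ceil_mono
      push_cast
      nlinarith
    simp only [hφdef]
    omega
  have hφmono : Monotone φ :=
    monotone_nat_of_le_succ (fun k => le_trans (Nat.le_succ _) (hφsucc k))
  have hφge : ∀ k, k ≤ φ k := fun k => le_trans (hkceil k) (Nat.le_add_right _ _)
  have hφ1 : ∀ k, 1 ≤ φ k := fun k => le_trans hm01 (Nat.le_add_left _ _)
  -- key pointwise comparison
  have hkey : ∀ k : ℕ, b * ((1+ε)*ξ)^k ≤ ξ ^ (φ k) := by
    intro k
    have hd : k ≤ ⌈(1+δ)*(k:ℝ)⌉₊ := hkceil k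
    set dk := ⌈(1+δ)*(k:ℝ)⌉₊ - k with hdkdef
    have hdkc : (dk:ℝ) = (⌈(1+δ)*(k:ℝ)⌉₊ : ℝ) - (k:ℝ) := by
      rw [hdkdef]; exact_mod_cast Nat.cast_sub hd
    have h2 : (1+ε)^k ≤ ξ ^ dk := by
      calc (1+ε)^k ≤ (ξ ^ (δ:ℝ))^k := pow_le_pow_left₀ (by linarith) hε2 k
        _ = ξ ^ (δ * (k:ℝ)) := by
            rw [← Real.rpow_natCast (ξ ^ (δ:ℝ)) k, ← Real.rpow_mul hξ0.le]
        _ ≤ ξ ^ ((dk : ℝ)) := by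
            refine (Real.rpow_le_rpow_left_iff hξ).2 ?_
            have := hceil_le k
            rw [hdkc]; nlinarith
        _ = ξ ^ dk := Real.rpow_natCast _ _
    have hφk : φ k = dk + k + m0 := by
      simp only [hφdef, hdkdef]; omega
    calc b * ((1+ε)*ξ)^k = b * ((1+ε)^k * ξ^k) := by rw [mul_pow]
      _ ≤ ξ^m0 * (ξ^dk * ξ^k) := by
          refine mul_le_mul hm0 ?_ (by positivity) (by positivity)
          exact mul_le_mul_of_nonneg_right h2 (by positivity)
      _ = ξ ^ (φ k) := by rw [hφk, pow_add, pow_add]; ring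
  have hnum : ∀ k : ℕ, a (φ k) ≤ g (Real.exp (-(b * ((1+ε)*ξ)^k))) := by
    intro k
    have hbc : (0:ℝ) ≤ b * ((1+ε)*ξ)^k := by positivity
    refine hgmono _ (hmem _ (by positivity)) _ (hmem _ hbc) ?_
    refine Real.exp_le_exp.2 ?_
    have := hkey k
    linarith
  have hgnn : ∀ k : ℕ, 0 ≤ g (Real.exp (-(b * ((1+ε)*ξ)^k))) := by
    intro k
    exact hg0 _ (hmem _ (by positivity))
  -- bounds on φ
  have hφub : ∀ n : ℕ, (φ n : ℝ) ≤ (1+δ)*(n:ℝ) + 1 + m0 := by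
    intro n; have := hceil_lt n; simp only [hφdef]; push_cast; linarith
  have hφlb : ∀ n : ℕ, (1+δ)*(n:ℝ) + m0 ≤ (φ n : ℝ) := by
    intro n; have := hceil_le n; simp only [hφdef]; push_cast; linarith
  set B : ℕ → ℝ := fun n => (1+δ)*((n:ℝ) - (k₁:ℝ)) + 2 + δ - ((φ n : ℝ) - (φ k₁ : ℝ))
    with hBdef
  have hBpos : ∀ n, 0 ≤ B n := by
    intro n
    have h1 := hφub n
    have h2 := hφlb k₁
    simp only [hBdef]
    linarith
  -- the Abel/budget induction
  have hR : ∀ n, k₁ ≤ n →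
      (∑ j ∈ Finset.Ioc (φ k₁) (φ n), a j) + B n * a (φ n) ≤
        (1+δ) * ∑ k ∈ Finset.Ico k₁ n, a (φ k) + (2+δ) * a (φ k₁) := by
    intro n hn
    induction n, hn using Nat.le_induction with
    | base =>
        have hBk : B k₁ = 2 + δ := by simp only [hBdef]; ring
        simp only [Finset.Ioc_self, Finset.Ico_self, Finset.sum_empty, hBk]
        linarith [ha0 (φ k₁)]
    | succ n hn ih =>
        have hmn : φ k₁ ≤ φ n := hφmono hn
        have hnn : φ n ≤ φ (n+1) := hφmono (Nat.le_succ n)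
        have hsplit : (∑ j ∈ Finset.Ioc (φ k₁) (φ n), a j)
            + ∑ j ∈ Finset.Ioc (φ n) (φ (n+1)), a j
            = ∑ j ∈ Finset.Ioc (φ k₁) (φ (n+1)), a j :=
          Finset.sum_Ioc_consecutive _ hmn hnn
        have hblock : ∑ j ∈ Finset.Ioc (φ n) (φ (n+1)), a j
            ≤ ((φ (n+1) : ℝ) - (φ n : ℝ)) * a (φ n) := by
          have h1 : ∑ j ∈ Finset.Ioc (φ n) (φ (n+1)), a j
              ≤ (Finset.Ioc (φ n) (φ (n+1))).card • a (φ n) :=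
            Finset.sum_le_card_nsmul _ _ _
              (fun j hj => hamono _ _ (le_of_lt (Finset.mem_Ioc.1 hj).1))
          rw [Nat.card_Ioc, nsmul_eq_mul] at h1
          rwa [Nat.cast_sub hnn] at h1
        have hsum : ∑ k ∈ Finset.Ico k₁ (n+1), a (φ k)
            = (∑ k ∈ Finset.Ico k₁ n, a (φ k)) + a (φ n) :=
          Finset.sum_Ico_succ_top hn _
        have hBrel : B (n+1) = B n + (1+δ) - ((φ (n+1):ℝ) - (φ n:ℝ)) := by
          simp only [hBdef]; push_cast; ring
        have hBn1 : (0:ℝ) ≤ B n + (1+δ) - ((φ (n+1):ℝ) - (φ n:ℝ)) :=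
          hBrel ▸ hBpos (n+1)
        have haa : a (φ (n+1)) ≤ a (φ n) := hamono _ _ hnn
        have hprod : (B n + (1+δ) - ((φ (n+1):ℝ) - (φ n:ℝ))) * a (φ (n+1))
            ≤ (B n + (1+δ) - ((φ (n+1):ℝ) - (φ n:ℝ))) * a (φ n) :=
          mul_le_mul_of_nonneg_left haa hBn1
        rw [← hsplit, hsum, hBrel]
        nlinarith [hblock, hprod, ih]
  -- main comparison
  have hcomp : ∀ n, k₁ ≤ n →
      ∑ j ∈ Finset.Icc 1 n, a j ≤
        (1+δ) * (∑ k ∈ Finset.Icc k₁ n, g (Real.exp (-(b * ((1+ε)*ξ)^k))))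
          + ((φ k₁ : ℝ) * a 1 + (2+δ) * a 1) := by
    intro n hn
    have h1 : ∑ j ∈ Finset.Icc 1 n, a j ≤ ∑ j ∈ Finset.Icc 1 (φ n), a j :=
      Finset.sum_le_sum_of_subset_of_nonneg
        (Finset.Icc_subset_Icc_right (hφge n)) (fun j _ _ => ha0 j)
    have h2 : ∑ j ∈ Finset.Icc 1 (φ n), a j
        = (∑ j ∈ Finset.Ioc 0 (φ k₁), a j) + ∑ j ∈ Finset.Ioc (φ k₁) (φ n), a j := by
      rw [show (1:ℕ) = 0 + 1 from rfl, Finset.Icc_add_one_left_eq_Ioc]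
      exact (Finset.sum_Ioc_consecutive _ (Nat.zero_le _) (hφmono hn)).symm
    have h3 : ∑ j ∈ Finset.Ioc 0 (φ k₁), a j ≤ (φ k₁ : ℝ) * a 1 := by
      have h := Finset.sum_le_card_nsmul (Finset.Ioc 0 (φ k₁)) a (a 1)
        (fun j hj => hamono _ _ (Finset.mem_Ioc.1 hj).1)
      rw [Nat.card_Ioc, nsmul_eq_mul] at h
      simpa using h
    have h4 : ∑ j ∈ Finset.Ioc (φ k₁) (φ n), a j
        ≤ (1+δ) * ∑ k ∈ Finset.Ico k₁ n, a (φ k) + (2+δ) * a (φ k₁) := by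
      have := hR n hn
      nlinarith [mul_nonneg (hBpos n) (ha0 (φ n))]
    have h5 : ∑ k ∈ Finset.Ico k₁ n, a (φ k) ≤ ∑ k ∈ Finset.Icc k₁ n, a (φ k) :=
      Finset.sum_le_sum_of_subset_of_nonneg Finset.Ico_subset_Icc_self
        (fun k _ _ => ha0 (φ k))
    have h6 : ∑ k ∈ Finset.Icc k₁ n, a (φ k)
        ≤ ∑ k ∈ Finset.Icc k₁ n, g (Real.exp (-(b * ((1+ε)*ξ)^k))) :=
      Finset.sum_le_sum (fun k _ => hnum k)
    have h7 : a (φ k₁) ≤ a 1 := hamono _ _ (hφ1 k₁)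
    have h5' := mul_le_mul_of_nonneg_left h5 hδ0.le
    have h6' := mul_le_mul_of_nonneg_left h6 hδ0.le
    have h7' := mul_le_mul_of_nonneg_left h7 (by linarith : (0:ℝ) ≤ 2+δ)
    linarith [h1, h2, h3, h4, h5', h6', h7']
  set K := (φ k₁ : ℝ) * a 1 + (2+δ) * a 1 with hKdef
  clear_value K
  -- the limit of the lower-bound sequence
  have hT : Tendsto (fun n => 1/(1+δ) - (K/(1+δ)) * (∑ j ∈ Finset.Icc 1 n, a j)⁻¹)
      atTop (nhds (1/(1+δ) - (K/(1+δ)) * 0)) :=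
    tendsto_const_nhds.sub (tendsto_const_nhds.mul hS.inv_tendsto_atTop)
  have hlim : 1 - δ < 1/(1+δ) - (K/(1+δ)) * 0 := by
    rw [mul_zero, sub_zero, lt_div_iff₀ hδ0]
    nlinarith
  have hev1 : ∀ᶠ n in atTop,
      1 - δ < 1/(1+δ) - (K/(1+δ)) * (∑ j ∈ Finset.Icc 1 n, a j)⁻¹ :=
    hT.eventually (eventually_gt_nhds hlim)
  have hev2 : ∀ᶠ n in atTop, (1:ℝ) ≤ ∑ j ∈ Finset.Icc 1 n, a j :=
    hS.eventually_ge_atTop 1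
  have hev3 : ∀ᶠ n in atTop, k₁ ≤ n := eventually_ge_atTop k₁
  have hev : ∀ᶠ n in atTop, ENNReal.ofReal (1 - δ) ≤
      ENNReal.ofReal
        ((∑ k ∈ Finset.Icc k₁ n, g (Real.exp (-(b * ((1 + ε) * ξ) ^ k)))) /
          (∑ j ∈ Finset.Icc 1 n, a j)) := by
    filter_upwards [hev1, hev2, hev3] with n h1 h2 h3
    apply ENNReal.ofReal_le_ofReal
    set S := ∑ j ∈ Finset.Icc 1 n, a j with hSdef
    set N := ∑ k ∈ Finset.Icc k₁ n, g (Real.exp (-(b * ((1 + ε) * ξ) ^ k))) with hNdef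
    clear_value S
    have hSpos : (0:ℝ) < S := lt_of_lt_of_le one_pos h2
    clear_value N
    have hc := hcomp n h3
    rw [← hSdef, ← hNdef] at hc
    have h4 : (S - K)/(1+δ) ≤ N := by
      rw [div_le_iff₀ hδ0]
      linarith [hc]
    have h5 : (S - K)/((1+δ) * S) ≤ N / S := by
      rw [← div_div]
      exact (div_le_div_iff_of_pos_right hSpos).2 h4
    have h6 : 1/(1+δ) - (K/(1+δ)) * S⁻¹ = (S - K)/((1+δ)*S) := by
      field_simp
    linarith [h5, h6 ▸ h1]
  simp only [hadef] at hev
  exact le_liminf_of_le (by isBoundedDefault) hev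
end

section
/- Let τ > 1 and let ℓ : ℝ → ℝ be measurable, positive on [t₀,∞) for some t₀ ≥ 1, and slowly varying at infinity. Let (W_i)_{i≥1} be independent, identically distributed random variables with P(W_1 > t) = ℓ(t)·t^{−(τ−1)} for all t ≥ t₀. Then for every δ ∈ (0,1) there exists N₀ such that for every integer N ≥ N₀: P( max_{1≤i≤N} W_i ≤ N^{(1−δ)/(τ−1)} ) ≤ exp(−N^{δ/2}). -/
open MeasureTheory ProbabilityTheory

/-- A function `ℓ : ℝ → ℝ` is slowly varying at infinity:
for every `c > 0`, `ℓ(ct)/ℓ(t) → 1` as `t → ∞`. -/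
def SlowlyVarying (l : ℝ → ℝ) : Prop :=
  ∀ c : ℝ, 0 < c → Filter.Tendsto (fun t => l (c * t) / l t) Filter.atTop (nhds 1)

open Filter Real

private lemma potter_lower (τ : ℝ) (hτ : 1 < τ) (t₀ : ℝ) (ht₀ : 1 ≤ t₀) (l : ℝ → ℝ)
    (hlpos : ∀ t, t₀ ≤ t → 0 < l t)
    (hmono : ∀ s t : ℝ, t₀ ≤ s → s ≤ t → l t * t ^ (-(τ-1)) ≤ l s * s ^ (-(τ-1)))
    (hsv : Filter.Tendsto (fun t => l (2 * t) / l t) Filter.atTop (nhds 1))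
    (ε : ℝ) (hε : 0 < ε) :
    ∃ C > 0, ∃ T, t₀ ≤ T ∧ ∀ t, T ≤ t → C * t ^ (-ε) ≤ l t := by
  set F : ℝ → ℝ := fun t => l t * t ^ (-(τ-1)) with hF
  have hτ1 : (0:ℝ) < τ - 1 := by linarith
  set s : ℝ := τ - 1 + ε with hs
  have hs0 : 0 < s := by positivity
  -- eventually the doubling ratio is at least 2^{-ε}
  have h2e : (2:ℝ) ^ (-ε) < 1 := by
    apply rpow_lt_one_of_one_lt_of_neg one_lt_two (by linarith)
  have hev : ∀ᶠ t in atTop, (2:ℝ) ^ (-ε) ≤ l (2 * t) / l t :=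
    hsv.eventually (eventually_ge_nhds h2e)
  obtain ⟨T', hT'⟩ := hev.exists_forall_of_atTop
  set T : ℝ := max T' t₀ with hT
  have hTt₀ : t₀ ≤ T := le_max_right _ _
  have hT1 : (1:ℝ) ≤ T := le_trans ht₀ hTt₀
  have hT0 : (0:ℝ) < T := lt_of_lt_of_le one_pos hT1
  have hFpos : ∀ t, t₀ ≤ t → 0 < F t := by
    intro t ht
    have ht0 : 0 < t := lt_of_lt_of_le (lt_of_lt_of_le one_pos ht₀) ht
    exact mul_pos (hlpos t ht) (rpow_pos_of_pos ht0 _)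
  -- one doubling step
  have hstep : ∀ t, T ≤ t → (2:ℝ) ^ (-s) * F t ≤ F (2 * t) := by
    intro t ht
    have ht₀t : t₀ ≤ t := le_trans hTt₀ ht
    have ht0 : 0 < t := lt_of_lt_of_le hT0 ht
    have hl2 : (2:ℝ) ^ (-ε) * l t ≤ l (2 * t) := by
      have h := hT' t (le_trans (le_max_left T' t₀) ht)
      rw [le_div_iff₀ (hlpos t ht₀t)] at h
      linarith [h]
    have h2t : F (2 * t) = l (2 * t) * ((2:ℝ) ^ (-(τ-1)) * t ^ (-(τ-1))) := by
      rw [hF]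
      simp only
      rw [mul_rpow (by norm_num) ht0.le]
    rw [h2t]
    have h2s : (2:ℝ) ^ (-s) = (2:ℝ) ^ (-ε) * (2:ℝ) ^ (-(τ-1)) := by
      rw [← rpow_add two_pos]; congr 1; rw [hs]; ring
    rw [h2s, hF]
    simp only
    have htp : (0:ℝ) < t ^ (-(τ-1)) := rpow_pos_of_pos ht0 _
    have h2p : (0:ℝ) < (2:ℝ) ^ (-(τ-1)) := rpow_pos_of_pos two_pos _
    calc (2:ℝ) ^ (-ε) * (2:ℝ) ^ (-(τ-1)) * (l t * t ^ (-(τ-1)))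
        = ((2:ℝ) ^ (-ε) * l t) * ((2:ℝ) ^ (-(τ-1)) * t ^ (-(τ-1))) := by ring
      _ ≤ l (2 * t) * ((2:ℝ) ^ (-(τ-1)) * t ^ (-(τ-1))) := by
          apply mul_le_mul_of_nonneg_right hl2 (by positivity)
  -- grid bound
  have hgrid : ∀ n : ℕ, (2:ℝ) ^ (-(s * n)) * F T ≤ F (2 ^ n * T) := by
    intro n
    induction n with
    | zero => simp
    | succ n ih =>
      have hTn : T ≤ 2 ^ n * T := le_mul_of_one_le_left hT0.le (one_le_pow₀ one_le_two)
      have h1 : (2:ℝ) ^ (n+1) * T = 2 * (2 ^ n * T) := by ring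
      rw [h1]
      calc (2:ℝ) ^ (-(s * (n+1:ℕ))) * F T
          = (2:ℝ) ^ (-s) * ((2:ℝ) ^ (-(s * n)) * F T) := by
            have he : (2:ℝ) ^ (-(s * ((n+1:ℕ):ℝ))) = 2 ^ (-s) * 2 ^ (-(s * (n:ℝ))) := by
              rw [← rpow_add two_pos]; congr 1; push_cast; ring
            rw [he]; ring
        _ ≤ (2:ℝ) ^ (-s) * F (2 ^ n * T) := by
            apply mul_le_mul_of_nonneg_left ih (rpow_pos_of_pos two_pos _).le
        _ ≤ F (2 * (2 ^ n * T)) := hstep _ hTn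
  -- conclude
  refine ⟨(2 / T) ^ (-s) * F T, mul_pos (rpow_pos_of_pos (by positivity) _) (hFpos T hTt₀), T, hTt₀, ?_⟩
  intro t ht
  have ht0 : 0 < t := lt_of_lt_of_le hT0 ht
  have ht₀t : t₀ ≤ t := le_trans hTt₀ ht
  have hdiv1 : (1:ℝ) ≤ t / T := (one_le_div hT0).mpr ht
  have hdiv0 : (0:ℝ) < t / T := lt_of_lt_of_le one_pos hdiv1
  set n : ℕ := ⌊Real.logb 2 (t / T)⌋₊ with hn
  have hlogb0 : 0 ≤ Real.logb 2 (t / T) := Real.logb_nonneg one_lt_two hdiv1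
  have hub : t / T < (2:ℝ) ^ ((n:ℝ) + 1) := by
    have h1 : Real.logb 2 (t / T) < (n:ℝ) + 1 := Nat.lt_floor_add_one _
    calc t / T = (2:ℝ) ^ (Real.logb 2 (t / T)) := (Real.rpow_logb two_pos (by norm_num) hdiv0).symm
      _ < (2:ℝ) ^ ((n:ℝ) + 1) := Real.rpow_lt_rpow_left_iff one_lt_two |>.mpr h1
  have hlb : (2:ℝ) ^ (n:ℝ) ≤ t / T := by
    have h1 : (n:ℝ) ≤ Real.logb 2 (t / T) := Nat.floor_le hlogb0
    calc (2:ℝ) ^ (n:ℝ) ≤ (2:ℝ) ^ (Real.logb 2 (t / T)) :=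
          Real.rpow_le_rpow_left_iff one_lt_two |>.mpr h1
      _ = t / T := Real.rpow_logb two_pos (by norm_num) hdiv0
  have hub' : t ≤ 2 ^ (n + 1) * T := by
    have : t / T ≤ (2:ℝ) ^ (n+1) := by
      rw [← Real.rpow_natCast 2 (n+1)]
      push_cast
      exact hub.le
    calc t = (t / T) * T := by field_simp
      _ ≤ (2:ℝ) ^ (n+1) * T := mul_le_mul_of_nonneg_right this hT0.le
  have h2n1 : (2:ℝ) ^ ((n:ℝ) + 1) ≤ 2 * (t / T) := by
    rw [rpow_add two_pos, rpow_one]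
    calc (2:ℝ) ^ (n:ℝ) * 2 ≤ (t / T) * 2 := mul_le_mul_of_nonneg_right hlb (by norm_num)
      _ = 2 * (t / T) := by ring
  have key : (2 * (t / T)) ^ (-s) * F T ≤ F t := by
    calc (2 * (t / T)) ^ (-s) * F T
        ≤ ((2:ℝ) ^ ((n:ℝ) + 1)) ^ (-s) * F T := by
          apply mul_le_mul_of_nonneg_right _ (hFpos T hTt₀).le
          exact Real.rpow_le_rpow_of_nonpos (rpow_pos_of_pos two_pos _) h2n1 (by linarith)
      _ = (2:ℝ) ^ (-(s * ((n:ℝ) + 1))) * F T := by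
          rw [← Real.rpow_mul (by norm_num : (0:ℝ) ≤ 2)]
          have he : ((n:ℝ)+1) * -s = -(s * ((n:ℝ)+1)) := by ring
          rw [he]
      _ ≤ F (2 ^ (n+1) * T) := by
          have h := hgrid (n+1)
          have hc : -(s * ((n+1:ℕ):ℝ)) = -(s * ((n:ℝ)+1)) := by push_cast; ring
          rwa [hc] at h
      _ ≤ F t := hmono t (2 ^ (n+1) * T) ht₀t hub'
  -- from F bound to l bound
  have hts : (2 * (t / T)) ^ (-s) = (2 / T) ^ (-s) * t ^ (-s) := by
    rw [← mul_rpow (by positivity) ht0.le]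
    congr 1
    field_simp
  have htpow : t ^ (-s) * t ^ (τ - 1) = t ^ (-ε) := by
    rw [← rpow_add ht0]; congr 1; rw [hs]; ring
  have hcancel : t ^ (-(τ-1)) * t ^ (τ-1) = 1 := by
    rw [← rpow_add ht0]; simp
  have := mul_le_mul_of_nonneg_right key (rpow_pos_of_pos ht0 (τ-1)).le
  rw [hF] at this
  simp only at this
  calc (2 / T) ^ (-s) * F T * t ^ (-ε)
      = (2 * (t / T)) ^ (-s) * F T * t ^ (τ-1) := by
        rw [hts, ← htpow]; ring
    _ ≤ l t * t ^ (-(τ-1)) * t ^ (τ-1) := this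
    _ = l t := by rw [mul_assoc, hcancel, mul_one]

/-- **(5.14).** For i.i.d. `W_i` with `P(W_1 > t) = ℓ(t) t^{-(τ-1)}` for `t ≥ t₀`, `ℓ`
slowly varying, and every `δ ∈ (0,1)`, there is `N₀` such that for all `N ≥ N₀`:
`P(max_{1≤i≤N} W_i ≤ N^{(1-δ)/(τ-1)}) ≤ exp(-N^{δ/2})`. -/
theorem stmt17 (τ : ℝ) (hτ : 1 < τ) (t₀ : ℝ) (ht₀ : 1 ≤ t₀)
    (l : ℝ → ℝ) (hlmeas : Measurable l) (hlpos : ∀ t : ℝ, t₀ ≤ t → 0 < l t)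
    (hlsv : SlowlyVarying l)
    {Ω : Type*} [MeasurableSpace Ω] (μ : Measure Ω) [IsProbabilityMeasure μ]
    (W : ℕ → Ω → ℝ) (hmeas : ∀ i, Measurable (W i))
    (hindep : iIndepFun W μ)
    (ν : Measure ℝ) [IsProbabilityMeasure ν] (hid : ∀ i, Measure.map (W i) μ = ν)
    (htail : ∀ t : ℝ, t₀ ≤ t → ν (Set.Ioi t) = ENNReal.ofReal (l t * t ^ (-(τ - 1)))) :
    ∀ δ ∈ Set.Ioo (0 : ℝ) 1, ∃ N₀ : ℕ, ∀ N : ℕ, N₀ ≤ N → ∀ hN1 : 1 ≤ N,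
      μ {ω | (Finset.Icc 1 N).sup' (Finset.nonempty_Icc.mpr hN1) (fun i => W i ω)
            ≤ (N : ℝ) ^ ((1 - δ) / (τ - 1))}
        ≤ ENNReal.ofReal (Real.exp (-((N : ℝ) ^ (δ / 2)))) := by
  intro δ hδ
  obtain ⟨hδ0, hδ1⟩ := hδ
  have hτ1 : (0:ℝ) < τ - 1 := by linarith
  set α : ℝ := (1 - δ) / (τ - 1) with hα_def
  have hα : 0 < α := div_pos (by linarith) hτ1
  set ε : ℝ := δ / (4 * α) with hε_def
  have hε : 0 < ε := div_pos hδ0 (by linarith)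
  have ht₀0 : (0:ℝ) < t₀ := lt_of_lt_of_le one_pos ht₀
  -- monotonicity of the tail function
  have hmono : ∀ s t : ℝ, t₀ ≤ s → s ≤ t → l t * t ^ (-(τ-1)) ≤ l s * s ^ (-(τ-1)) := by
    intro s t hs hst
    have h1 : ν (Set.Ioi t) ≤ ν (Set.Ioi s) := measure_mono (Set.Ioi_subset_Ioi hst)
    rw [htail s hs, htail t (hs.trans hst)] at h1
    have hnn : 0 ≤ l s * s ^ (-(τ-1)) :=
      (mul_pos (hlpos s hs) (rpow_pos_of_pos (lt_of_lt_of_le ht₀0 hs) _)).le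
    exact (ENNReal.ofReal_le_ofReal_iff hnn).mp h1
  obtain ⟨C, hC, T, hTt₀, hpot⟩ :=
    potter_lower τ hτ t₀ ht₀ l hlpos hmono (hlsv 2 two_pos) ε hε
  -- eventual conditions on N
  have hNα : Tendsto (fun N : ℕ => (N:ℝ) ^ α) atTop atTop :=
    (tendsto_rpow_atTop hα).comp tendsto_natCast_atTop_atTop
  have h1 : ∀ᶠ N : ℕ in atTop, max T t₀ ≤ (N:ℝ) ^ α := hNα.eventually_ge_atTop _
  have hNδ : Tendsto (fun N : ℕ => C * (N:ℝ) ^ (δ/4)) atTop atTop :=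
    ((tendsto_rpow_atTop (by linarith : (0:ℝ) < δ/4)).comp
      tendsto_natCast_atTop_atTop).const_mul_atTop hC
  have h2 : ∀ᶠ N : ℕ in atTop, 1 ≤ C * (N:ℝ) ^ (δ/4) := hNδ.eventually_ge_atTop _
  obtain ⟨N₀, hN₀⟩ := eventually_atTop.mp (h1.and h2)
  refine ⟨N₀, ?_⟩
  intro N hN hN1
  obtain ⟨hA, hB⟩ := hN₀ N hN
  have hN0 : (0:ℝ) < N := by exact_mod_cast hN1
  set a : ℝ := (N:ℝ) ^ α with ha_def
  have ha0 : 0 < a := rpow_pos_of_pos hN0 _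
  have hat₀ : t₀ ≤ a := le_trans (le_max_right _ _) hA
  have haT : T ≤ a := le_trans (le_max_left _ _) hA
  set p : ℝ := l a * a ^ (-(τ-1)) with hp_def
  have hp0 : 0 ≤ p := (mul_pos (hlpos a hat₀) (rpow_pos_of_pos ha0 _)).le
  have hνIoi : ν (Set.Ioi a) = ENNReal.ofReal p := htail a hat₀
  have hp1 : p ≤ 1 := by
    have h := prob_le_one (μ := ν) (s := Set.Ioi a)
    rw [hνIoi] at h
    exact ENNReal.ofReal_le_one.mp h
  have hνIic : ν (Set.Iic a) = ENNReal.ofReal (1 - p) := by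
    have hc : Set.Iic a = (Set.Ioi a)ᶜ := by simp
    rw [hc, measure_compl measurableSet_Ioi (measure_ne_top ν _), measure_univ, hνIoi,
      ENNReal.ofReal_sub _ hp0, ENNReal.ofReal_one]
  -- rewrite the event as an intersection
  have hev : {ω | (Finset.Icc 1 N).sup' (Finset.nonempty_Icc.mpr hN1) (fun i => W i ω) ≤ a}
      = ⋂ i ∈ Finset.Icc 1 N, W i ⁻¹' Set.Iic a := by
    ext ω
    simp [Finset.sup'_le_iff]
  rw [hev, hindep.meas_biInter (fun i _ => ⟨Set.Iic a, measurableSet_Iic, rfl⟩)]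
  have hmap : ∀ i, μ (W i ⁻¹' Set.Iic a) = ν (Set.Iic a) := fun i => by
    rw [← hid i, Measure.map_apply (hmeas i) measurableSet_Iic]
  rw [Finset.prod_congr rfl (fun i _ => hmap i), Finset.prod_const, Nat.card_Icc,
    Nat.add_sub_cancel, hνIic, ← ENNReal.ofReal_pow (by linarith)]
  apply ENNReal.ofReal_le_ofReal
  -- exponent identities
  have hexp1 : a ^ (-(τ-1)) = (N:ℝ) ^ (-(1-δ)) := by
    rw [ha_def, ← Real.rpow_mul hN0.le]
    congr 1
    rw [hα_def]
    field_simp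
  have hexp2 : a ^ (-ε) = (N:ℝ) ^ (-(δ/4)) := by
    rw [ha_def, ← Real.rpow_mul hN0.le]
    congr 1
    rw [hε_def]
    field_simp
  have hla : C * (N:ℝ) ^ (-(δ/4)) ≤ l a := by
    rw [← hexp2]; exact hpot a haT
  have hcomb : ((N:ℝ) ^ (1:ℝ)) * ((N:ℝ) ^ (-(δ/4)) * (N:ℝ) ^ (-(1-δ)))
      = (N:ℝ) ^ (δ/4) * (N:ℝ) ^ (δ/2) := by
    rw [← Real.rpow_add hN0, ← Real.rpow_add hN0, ← Real.rpow_add hN0]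
    congr 1
    ring
  have key : (N:ℝ) ^ (δ/2) ≤ (N:ℝ) * p := by
    have hNe : (0:ℝ) < (N:ℝ) ^ (-(1-δ)) := rpow_pos_of_pos hN0 _
    have h3 : (N:ℝ) * (C * (N:ℝ) ^ (-(δ/4)) * (N:ℝ) ^ (-(1-δ)))
        ≤ (N:ℝ) * (l a * (N:ℝ) ^ (-(1-δ))) := by
      apply mul_le_mul_of_nonneg_left _ hN0.le
      exact mul_le_mul_of_nonneg_right hla hNe.le
    have h4 : (N:ℝ) * (C * (N:ℝ) ^ (-(δ/4)) * (N:ℝ) ^ (-(1-δ)))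
        = (C * (N:ℝ) ^ (δ/4)) * (N:ℝ) ^ (δ/2) := by
      have := hcomb
      rw [Real.rpow_one] at this
      calc (N:ℝ) * (C * (N:ℝ) ^ (-(δ/4)) * (N:ℝ) ^ (-(1-δ)))
          = C * ((N:ℝ) * ((N:ℝ) ^ (-(δ/4)) * (N:ℝ) ^ (-(1-δ)))) := by ring
        _ = C * ((N:ℝ) ^ (δ/4) * (N:ℝ) ^ (δ/2)) := by rw [this]
        _ = (C * (N:ℝ) ^ (δ/4)) * (N:ℝ) ^ (δ/2) := by ring
    have h5 : (N:ℝ) ^ (δ/2) ≤ (C * (N:ℝ) ^ (δ/4)) * (N:ℝ) ^ (δ/2) :=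
      le_mul_of_one_le_left (rpow_nonneg hN0.le _) hB
    have h6 : (N:ℝ) * p = (N:ℝ) * (l a * (N:ℝ) ^ (-(1-δ))) := by
      rw [hp_def, hexp1]
    linarith [h4 ▸ h3]
  -- final real inequality
  calc (1 - p) ^ N ≤ (Real.exp (-p)) ^ N := by
        apply pow_le_pow_left₀ (by linarith)
        linarith [Real.add_one_le_exp (-p)]
    _ = Real.exp (-((N:ℝ) * p)) := by
        rw [← Real.exp_nat_mul]
        congr 1
        ring
    _ ≤ Real.exp (-((N:ℝ) ^ (δ/2))) := Real.exp_le_exp.mpr (by linarith)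
end

section
/- Let (L_{k,j})_{k≥1, j≥1} be a doubly indexed family of independent, identically distributed nonnegative real random variables with common cumulative distribution function F, and let F^{(−1)}(q) := inf{t ∈ ℝ : F(t) ≥ q}. Let (b_k)_{k≥1} be positive integers growing double-exponentially, i.e. there are constants b₁, b₂ > 0 and 1 < c₁ ≤ c₂ such that exp(b₁·c₁^k) ≤ b_k ≤ exp(b₂·c₂^k) for all k ≥ 1. Then ∑_{k=1}^∞ min_{1≤j≤b_k} L_{k,j} < ∞ almost surely if and only if ∫_0^∞ F^{(−1)}(exp(−e^y)) dy < ∞. -/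
open MeasureTheory Set Filter Topology ProbabilityTheory
open scoped ENNReal NNReal
namespace Stmt19Aux



noncomputable def Finv (ν : Measure ℝ) (q : ℝ) : ℝ :=
  sInf {t : ℝ | q ≤ (ν (Set.Iic t)).toReal}

variable {ν : Measure ℝ} [IsProbabilityMeasure ν] {q q' s : ℝ}

lemma Fmono : Monotone (fun t => (ν (Iic t)).toReal) := fun a b hab =>
  ENNReal.toReal_mono (measure_ne_top ν _) (measure_mono (Iic_subset_Iic.2 hab))

lemma set_nonempty (hq : q < 1) : {t : ℝ | q ≤ (ν (Iic t)).toReal}.Nonempty := by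
  have h := (ENNReal.tendsto_toReal (measure_ne_top ν univ)).comp
    (tendsto_measure_Iic_atTop (μ := ν))
  rw [measure_univ] at h
  simp only [ENNReal.toReal_one] at h
  have h2 : ∀ᶠ x : ℝ in atTop, q ≤ (ν (Iic x)).toReal :=
    h.eventually (eventually_ge_nhds hq)
  obtain ⟨t, ht⟩ := h2.exists
  exact ⟨t, ht⟩

lemma subset_Ici (hν0 : ν (Iio 0) = 0) (hq : 0 < q) :
    {t : ℝ | q ≤ (ν (Iic t)).toReal} ⊆ Ici 0 := by
  intro t ht
  by_contra h
  simp only [mem_Ici, not_le] at h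
  have : ν (Iic t) = 0 :=
    measure_mono_null (Iic_subset_Iio.2 h) hν0
  simp [this] at ht
  exact absurd ht (not_le.2 hq)

lemma bddBelow_set (hν0 : ν (Iio 0) = 0) (hq : 0 < q) :
    BddBelow {t : ℝ | q ≤ (ν (Iic t)).toReal} :=
  ⟨0, fun t ht => subset_Ici hν0 hq ht⟩

lemma Finv_nonneg (hν0 : ν (Iio 0) = 0) (hq : 0 < q) (hq1 : q < 1) : 0 ≤ Finv ν q :=
  le_csInf (set_nonempty hq1) (fun t ht => subset_Ici hν0 hq ht)

lemma Finv_le (hν0 : ν (Iio 0) = 0) (hq : 0 < q) (h : q ≤ (ν (Iic s)).toReal) :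
    Finv ν q ≤ s :=
  csInf_le (bddBelow_set hν0 hq) h

lemma F_lt_of_lt_Finv (hν0 : ν (Iio 0) = 0) (hq : 0 < q) (h : s < Finv ν q) :
    (ν (Iic s)).toReal < q := by
  by_contra hc
  exact absurd (Finv_le hν0 hq (not_lt.1 hc)) (not_le.2 h)

lemma Finv_mono (hν0 : ν (Iio 0) = 0) (hq : 0 < q) (hq' : q' < 1) (hqq : q ≤ q') :
    Finv ν q ≤ Finv ν q' := by
  refine csInf_le_csInf (bddBelow_set hν0 hq) (set_nonempty hq') ?_
  intro t ht
  exact le_trans hqq ht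

lemma F_Finv_ge (hν0 : ν (Iio 0) = 0) (hq : 0 < q) (hq1 : q < 1) :
    q ≤ (ν (Iic (Finv ν q))).toReal := by
  set T := Finv ν q with hT
  have hmem : ∀ n : ℕ, q ≤ (ν (Iic (T + 1/(n+1)))).toReal := by
    intro n
    have hpos : (0:ℝ) < 1/(n+1) := by positivity
    obtain ⟨t, ht, htlt⟩ := (csInf_lt_iff (bddBelow_set hν0 hq) (set_nonempty hq1)).1
      (by rw [← hT]; linarith : Finv ν q < T + 1/(n+1))
    exact le_trans ht (Fmono htlt.le)
  have hInter : Iic T = ⋂ n : ℕ, Iic (T + 1/(n+1)) := by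
    ext x
    simp only [mem_Iic, mem_iInter]
    constructor
    · intro h n
      have hp : (0:ℝ) < 1/(n+1) := by positivity
      linarith
    · intro h
      by_contra hx
      push_neg at hx
      obtain ⟨n, hn⟩ := exists_nat_one_div_lt (by linarith : 0 < x - T)
      have := h n
      linarith
  have htend : Tendsto (fun n : ℕ => ν (Iic (T + 1/(n+1)))) atTop (𝓝 (ν (Iic T))) := by
    rw [hInter]
    refine tendsto_measure_iInter_atTop (fun n => measurableSet_Iic.nullMeasurableSet) ?_ ⟨0, measure_ne_top _ _⟩
    intro m n hmn
    refine Iic_subset_Iic.2 ?_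
    have h1 : 1/((n:ℝ)+1) ≤ 1/((m:ℝ)+1) := by
      apply one_div_le_one_div_of_le (by positivity)
      exact_mod_cast Nat.add_le_add_right hmn 1
    linarith
  have := (ENNReal.tendsto_toReal (measure_ne_top ν _)).comp htend
  exact le_of_tendsto_of_tendsto tendsto_const_nhds this (Eventually.of_forall hmem)


lemma pairwise_grid {a δ : ℝ} (hδ : 0 < δ) :
    Pairwise (Function.onFun Disjoint fun k : ℕ => Ico (a + k*δ) (a + (k+1)*δ)) := by
  have key : ∀ i j : ℕ, i < j → Disjoint (Ico (a + i*δ) (a + (i+1)*δ)) (Ico (a + j*δ) (a + (j+1)*δ)) := by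
    intro i j hij
    refine Set.disjoint_left.2 fun x hxi hxj => ?_
    have hij' : (i:ℝ) + 1 ≤ j := by exact_mod_cast hij
    have h1 : a + ((i:ℝ)+1)*δ ≤ a + j*δ := by nlinarith
    exact absurd hxj.1 (not_le.2 (lt_of_lt_of_le hxi.2 h1))
  intro i j hij
  rcases lt_or_gt_of_ne hij with h | h
  · exact key i j h
  · exact (key j i h).symm

lemma iUnion_Ico_grid {a δ : ℝ} (hδ : 0 < δ) :
    (⋃ k : ℕ, Ico (a + k*δ) (a + (k+1)*δ)) = Ici a := by
  ext x
  simp only [mem_iUnion, mem_Ico, mem_Ici]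
  constructor
  · rintro ⟨k, h1, -⟩
    have : (0:ℝ) ≤ (k:ℝ)*δ := by positivity
    linarith
  · intro hx
    refine ⟨⌊(x - a)/δ⌋₊, ?_, ?_⟩
    · have h1 : (⌊(x - a)/δ⌋₊ : ℝ) ≤ (x - a)/δ := Nat.floor_le (div_nonneg (by linarith) hδ.le)
      have := (le_div_iff₀ hδ).1 h1
      linarith
    · have h2 : (x - a)/δ < ⌊(x - a)/δ⌋₊ + 1 := Nat.lt_floor_add_one _
      have := (div_lt_iff₀ hδ).1 h2
      linarith

variable {h : ℝ → ℝ≥0∞}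

lemma lintegral_Ici_eq_tsum (hmeas : Measurable h) {a δ : ℝ} (hδ : 0 < δ) :
    ∫⁻ y in Ici a, h y = ∑' k : ℕ, ∫⁻ y in Ico (a + k*δ) (a + (k+1)*δ), h y := by
  rw [← iUnion_Ico_grid (a := a) hδ, lintegral_iUnion (fun k => measurableSet_Ico) (pairwise_grid hδ)]

lemma setLIntegral_Ico_le {u v : ℝ} (hh : Antitone h) (huv : u ≤ v) :
    ∫⁻ y in Ico u v, h y ≤ h u * ENNReal.ofReal (v - u) := by
  calc ∫⁻ y in Ico u v, h y ≤ ∫⁻ _ in Ico u v, h u :=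
        setLIntegral_mono measurable_const (fun y hy => hh hy.1)
    _ = h u * ENNReal.ofReal (v - u) := by
        rw [setLIntegral_const, Real.volume_Ico]

lemma le_setLIntegral_Ico {u v : ℝ} (hmeas : Measurable h) (hh : Antitone h) (huv : u ≤ v) :
    h v * ENNReal.ofReal (v - u) ≤ ∫⁻ y in Ico u v, h y := by
  calc h v * ENNReal.ofReal (v - u) = ∫⁻ _ in Ico u v, h v := by
        rw [setLIntegral_const, Real.volume_Ico]
    _ ≤ ∫⁻ y in Ico u v, h y := setLIntegral_mono hmeas (fun y hy => hh hy.2.le)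

lemma lintegral_lt_top_of_summable_grid (hh : Antitone h) (h0 : h 0 ≠ ∞)
    {a δ : ℝ} (ha : 0 ≤ a) (hδ : 0 < δ) (hsum : ∑' k : ℕ, h (a + k*δ) ≠ ∞) :
    ∫⁻ y in Ici (0:ℝ), h y < ∞ := by
  have hmeas : Measurable h := hh.measurable
  have hsplit : ∫⁻ y in Ici (0:ℝ), h y
      = (∫⁻ y in Ico 0 a, h y) + ∫⁻ y in Ici a, h y := by
    rw [← lintegral_union measurableSet_Ici ((Set.Iio_disjoint_Ici le_rfl).mono_left Set.Ico_subset_Iio_self), Ico_union_Ici_eq_Ici ha]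
  rw [hsplit]
  have h1 : ∫⁻ y in Ico 0 a, h y ≤ h 0 * ENNReal.ofReal a := by
    simpa using setLIntegral_Ico_le hh ha
  have h2 : ∫⁻ y in Ici a, h y ≤ (∑' k : ℕ, h (a + k*δ)) * ENNReal.ofReal δ := by
    rw [lintegral_Ici_eq_tsum hmeas hδ, ← ENNReal.tsum_mul_right]
    refine ENNReal.tsum_le_tsum fun k => ?_
    have := setLIntegral_Ico_le (h := h) hh
      (by nlinarith [k.cast_nonneg (α := ℝ)] : a + (k:ℝ)*δ ≤ a + ((k:ℝ)+1)*δ)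
    calc ∫⁻ y in Ico (a + k*δ) (a + (k+1)*δ), h y
        ≤ h (a + k*δ) * ENNReal.ofReal ((a + ((k:ℝ)+1)*δ) - (a + k*δ)) := this
      _ = h (a + k*δ) * ENNReal.ofReal δ := by ring_nf
  calc (∫⁻ y in Ico 0 a, h y) + ∫⁻ y in Ici a, h y
      ≤ h 0 * ENNReal.ofReal a + (∑' k : ℕ, h (a + k*δ)) * ENNReal.ofReal δ := add_le_add h1 h2
    _ < ∞ := by
        apply ENNReal.add_lt_top.2
        constructor
        · exact ENNReal.mul_lt_top h0.lt_top ENNReal.ofReal_lt_top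
        · exact ENNReal.mul_lt_top hsum.lt_top ENNReal.ofReal_lt_top

lemma tsum_grid_le_lintegral (hh : Antitone h)
    {a δ : ℝ} (ha : 0 ≤ a) (hδ : 0 < δ) :
    (∑' k : ℕ, h (a + ((k:ℝ)+1)*δ)) * ENNReal.ofReal δ ≤ ∫⁻ y in Ici (0:ℝ), h y := by
  have hmeas : Measurable h := hh.measurable
  calc (∑' k : ℕ, h (a + ((k:ℝ)+1)*δ)) * ENNReal.ofReal δ
      = ∑' k : ℕ, h (a + ((k:ℝ)+1)*δ) * ENNReal.ofReal δ := by rw [ENNReal.tsum_mul_right]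
    _ ≤ ∑' k : ℕ, ∫⁻ y in Ico (a + k*δ) (a + (k+1)*δ), h y := by
        refine ENNReal.tsum_le_tsum fun k => ?_
        have heq : ENNReal.ofReal δ = ENNReal.ofReal ((a + ((k:ℝ)+1)*δ) - (a + k*δ)) := by ring_nf
        rw [heq]
        exact le_setLIntegral_Ico hmeas hh (by nlinarith [k.cast_nonneg (α := ℝ)])
    _ = ∫⁻ y in Ici a, h y := (lintegral_Ici_eq_tsum hmeas hδ).symm
    _ ≤ ∫⁻ y in Ici (0:ℝ), h y := lintegral_mono_set (Ici_subset_Ici.2 ha)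


lemma summable_iff_summable_min_one {f : ℕ → ℝ} (hf : ∀ k, 0 ≤ f k) :
    Summable f ↔ Summable (fun k => min (f k) 1) := by
  constructor
  · intro h
    exact h.of_nonneg_of_le (fun k => le_min (hf k) zero_le_one) (fun k => min_le_left _ _)
  · intro h
    have h0 : Tendsto (fun k => min (f k) 1) atTop (𝓝 0) := h.tendsto_atTop_zero
    have hev : ∀ᶠ k in atTop, f k = min (f k) 1 := by
      filter_upwards [h0.eventually (eventually_lt_nhds one_pos)] with k hk
      rcases min_cases (f k) 1 with ⟨heq, hle⟩ | ⟨heq, hlt⟩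
      · exact heq.symm
      · rw [heq] at hk; exact absurd hk (lt_irrefl _)
    obtain ⟨K, hK⟩ := eventually_atTop.1 hev
    have h1 : Summable (fun k => min (f (k + K)) 1) := (summable_nat_add_iff K).2 h
    have h2 : (fun k => min (f (k + K)) 1) = fun k => f (k + K) :=
      funext fun k => (hK (k + K) (Nat.le_add_left K k)).symm
    rw [h2] at h1
    exact (summable_nat_add_iff K).1 h1

lemma measurable_finset_inf' {ι Ω : Type*} [MeasurableSpace Ω] (s : Finset ι) (hs : s.Nonempty)
    (f : ι → Ω → ℝ) (hf : ∀ i, Measurable (f i)) :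
    Measurable fun ω => s.inf' hs fun i => f i ω := by
  induction hs using Finset.Nonempty.cons_induction with
  | singleton i => simpa using hf i
  | cons i s hi hne ih =>
    simp only [Finset.inf'_cons (H := hne)]
    exact (hf i).inf ih

-- exp(-x) ≤ 1 - (1 - e⁻¹) x for x ∈ [0,1]
lemma exp_neg_le (x : ℝ) (h0 : 0 ≤ x) (h1 : x ≤ 1) :
    Real.exp (-x) ≤ 1 - (1 - Real.exp (-1)) * x := by
  have := convexOn_exp.2 (mem_univ (0:ℝ)) (mem_univ (-1:ℝ)) (by linarith : (0:ℝ) ≤ 1 - x) h0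
    (by ring : (1 - x) + x = 1)
  simp only [smul_eq_mul, mul_zero, Real.exp_zero, mul_one] at this
  calc Real.exp (-x) = Real.exp ((1-x) * 0 + x * (-1)) := by ring_nf
    _ ≤ (1-x) * 1 + x * Real.exp (-1) := by simpa using this
    _ = 1 - (1 - Real.exp (-1)) * x := by ring

-- (1 - e⁻¹) x ≤ 1 - exp(-x), corollary
lemma le_one_sub_exp_neg (x : ℝ) (h0 : 0 ≤ x) (h1 : x ≤ 1) :
    (1 - Real.exp (-1)) * x ≤ 1 - Real.exp (-x) := by
  have := exp_neg_le x h0 h1; linarith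





variable {ν : Measure ℝ} [IsProbabilityMeasure ν]

/-- generalized inverse at doubly-exponential argument -/
noncomputable def gfun (ν : Measure ℝ) (z : ℝ) : ℝ := Finv ν (Real.exp (-Real.exp z))

lemma q_pos (z : ℝ) : 0 < Real.exp (-Real.exp z) := Real.exp_pos _

lemma q_lt_one (z : ℝ) : Real.exp (-Real.exp z) < 1 :=
  Real.exp_lt_one_iff.2 (neg_neg_iff_pos.2 (Real.exp_pos _))

lemma gfun_nonneg (hν0 : ν (Iio 0) = 0) (z : ℝ) : 0 ≤ gfun ν z :=
  Finv_nonneg hν0 (q_pos z) (q_lt_one z)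

lemma gfun_anti (hν0 : ν (Iio 0) = 0) : Antitone (gfun ν) := by
  intro z z' hzz
  exact Finv_mono hν0 (q_pos z') (q_lt_one z)
    (Real.exp_le_exp.2 (neg_le_neg (Real.exp_le_exp.2 hzz)))

lemma F_le_one (s : ℝ) : (ν (Iic s)).toReal ≤ 1 := by
  have h : ν (Iic s) ≤ 1 := by
    have := measure_mono (subset_univ (Iic s)) (μ := ν)
    rwa [measure_univ] at this
  calc (ν (Iic s)).toReal ≤ (1:ℝ≥0∞).toReal := ENNReal.toReal_mono ENNReal.one_ne_top h
    _ = 1 := ENNReal.toReal_one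

/-- Direction: integral finite implies `Summable EN`. -/
lemma summable_of_lintegral_lt_top (hν0 : ν (Iio 0) = 0)
    (b : ℕ → ℕ) (b₁ c₁ : ℝ) (hb₁ : 0 < b₁) (hc₁ : 1 < c₁)
    (hgrow₁ : ∀ k : ℕ, Real.exp (b₁ * c₁ ^ (k+1)) ≤ (b (k+1) : ℝ))
    (EN : ℕ → ℝ) (hEN0 : ∀ k, 0 ≤ EN k)
    (hU : ∀ k (s : ℝ), 0 ≤ s → EN k ≤ s + (1 - (ν (Iic s)).toReal) ^ (b (k+1)))
    (hint : (∫⁻ y in Ici (0:ℝ), ENNReal.ofReal (gfun ν y)) < ⊤) :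
    Summable EN := by
  have hδ : 0 < Real.log c₁ := Real.log_pos hc₁
  set δ := Real.log c₁ with hδdef
  -- basic facts on b
  have hbpos' : ∀ k, (0:ℝ) < b (k+1) := fun k =>
    lt_of_lt_of_le (Real.exp_pos _) (hgrow₁ k)
  have hlogb : ∀ k, b₁ * c₁ ^ (k+1) ≤ Real.log (b (k+1)) := by
    intro k
    have := Real.log_le_log (Real.exp_pos _) (hgrow₁ k)
    rwa [Real.log_exp] at this
  have hlogbpos : ∀ k, 0 < Real.log (b (k+1)) := fun k =>
    lt_of_lt_of_le (by positivity) (hlogb k)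
  set zk : ℕ → ℝ := fun k => Real.log (2⁻¹ * Real.log (b (k+1))) with hzkdef
  have hexpzk : ∀ k, Real.exp (zk k) = 2⁻¹ * Real.log (b (k+1)) := fun k =>
    Real.exp_log (mul_pos (by norm_num) (hlogbpos k))
  -- Step 1 : upper bound on EN k
  have step1 : ∀ k, EN k ≤ gfun ν (zk k) +
      Real.exp (-Real.exp (2⁻¹ * Real.log (b (k+1)))) := by
    intro k
    have hq1 : Real.exp (-Real.exp (zk k)) ≤ (ν (Iic (gfun ν (zk k)))).toReal :=
      F_Finv_ge hν0 (q_pos _) (q_lt_one _)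
    have hFs1 : (1:ℝ) - (ν (Iic (gfun ν (zk k)))).toReal ≤
        Real.exp (-(Real.exp (-Real.exp (zk k)))) := by
      have h2 : 1 - (ν (Iic (gfun ν (zk k)))).toReal ≤ 1 - Real.exp (-Real.exp (zk k)) := by
        linarith
      have h3 : 1 - Real.exp (-Real.exp (zk k)) ≤ Real.exp (-(Real.exp (-Real.exp (zk k)))) := by
        have := Real.add_one_le_exp (-(Real.exp (-Real.exp (zk k))))
        linarith
      linarith
    have hFsnn : (0:ℝ) ≤ 1 - (ν (Iic (gfun ν (zk k)))).toReal := by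
      have := F_le_one (ν := ν) (gfun ν (zk k)); linarith
    have hpow : (1 - (ν (Iic (gfun ν (zk k)))).toReal) ^ (b (k+1)) ≤
        Real.exp (-(Real.exp (-Real.exp (zk k)))) ^ (b (k+1)) :=
      pow_le_pow_left₀ hFsnn hFs1 _
    have hexppow : Real.exp (-(Real.exp (-Real.exp (zk k)))) ^ (b (k+1)) =
        Real.exp (-((b (k+1) : ℝ) * Real.exp (-Real.exp (zk k)))) := by
      rw [← Real.exp_nat_mul]; ring_nf
    have hbq : (b (k+1) : ℝ) * Real.exp (-Real.exp (zk k)) =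
        Real.exp (2⁻¹ * Real.log (b (k+1))) := by
      rw [hexpzk]
      calc (b (k+1) : ℝ) * Real.exp (-(2⁻¹ * Real.log (b (k+1))))
          = Real.exp (Real.log (b (k+1))) * Real.exp (-(2⁻¹ * Real.log (b (k+1)))) := by
            rw [Real.exp_log (hbpos' k)]
        _ = Real.exp (Real.log (b (k+1)) + -(2⁻¹ * Real.log (b (k+1)))) := (Real.exp_add _ _).symm
        _ = Real.exp (2⁻¹ * Real.log (b (k+1))) := by ring_nf
    calc EN k ≤ gfun ν (zk k) + (1 - (ν (Iic (gfun ν (zk k)))).toReal) ^ (b (k+1)) :=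
          hU k _ (gfun_nonneg hν0 _)
      _ ≤ gfun ν (zk k) + Real.exp (-((b (k+1):ℝ) * Real.exp (-Real.exp (zk k)))) := by
          rw [← hexppow]; linarith
      _ = gfun ν (zk k) + Real.exp (-Real.exp (2⁻¹ * Real.log (b (k+1)))) := by rw [hbq]
  -- Step 2 : the error terms are summable
  set β := b₁ / 2 * (c₁ - 1) with hβdef
  have hβ : 0 < β := mul_pos (by linarith) (by linarith)
  have step2 : Summable (fun k => Real.exp (-Real.exp (2⁻¹ * Real.log (b (k+1))))) := by
    have hbound : ∀ k : ℕ, Real.exp (-Real.exp (2⁻¹ * Real.log (b (k+1)))) ≤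
        Real.exp (-β) ^ k := by
      intro k
      have h1 : β * k ≤ 2⁻¹ * Real.log (b (k+1)) := by
        have hB : 1 + ((k:ℝ)+1) * (c₁ - 1) ≤ c₁ ^ (k+1) := by
          have := one_add_mul_le_pow (by linarith : (-2:ℝ) ≤ c₁ - 1) (k+1)
          have h' : (1:ℝ) + (c₁ - 1) = c₁ := by ring
          rw [h'] at this
          push_cast at this
          linarith
        have h2 : b₁ * c₁ ^ (k+1) ≤ Real.log (b (k+1)) := hlogb k
        have hk0 : (0:ℝ) ≤ k := Nat.cast_nonneg k
        nlinarith
      have h2 : β * k ≤ Real.exp (2⁻¹ * Real.log (b (k+1))) := by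
        have := Real.add_one_le_exp (2⁻¹ * Real.log (b (k+1)))
        linarith
      calc Real.exp (-Real.exp (2⁻¹ * Real.log (b (k+1)))) ≤ Real.exp (-(β * k)) :=
            Real.exp_le_exp.2 (by linarith)
        _ = Real.exp (-β) ^ k := by rw [← Real.exp_nat_mul]; ring_nf
    refine Summable.of_nonneg_of_le (fun k => (Real.exp_pos _).le) hbound ?_
    exact summable_geometric_of_lt_one (Real.exp_pos _).le
      (Real.exp_lt_one_iff.2 (by linarith))
  -- Step 3 : summability of the main terms
  have step3 : Summable (fun k => gfun ν (zk k)) := by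
    set a₀ := Real.log (b₁ / 2) + δ with ha₀def
    set K := ⌈(-a₀)/δ⌉₊ with hKdef
    set a := a₀ + K * δ with hadef
    have ha : 0 ≤ a := by
      have h1 : (-a₀)/δ ≤ K := Nat.le_ceil _
      have := (div_le_iff₀ hδ).1 h1
      rw [hadef]; linarith
    have hzk_ge : ∀ k : ℕ, a₀ + k * δ ≤ zk k := by
      intro k
      have hpos1 : (0:ℝ) < b₁ / 2 * c₁ ^ (k+1) := by positivity
      have h1 : Real.log (b₁ / 2 * c₁ ^ (k+1)) ≤ zk k := by
        apply Real.log_le_log hpos1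
        have := hlogb k
        nlinarith
      have h2 : Real.log (b₁ / 2 * c₁ ^ (k+1)) = Real.log (b₁/2) + ((k:ℝ)+1) * δ := by
        rw [Real.log_mul (by positivity) (by positivity), Real.log_pow]
        rw [hδdef]; push_cast; ring
      rw [h2] at h1
      calc a₀ + k * δ = Real.log (b₁/2) + ((k:ℝ)+1) * δ := by rw [ha₀def]; ring
        _ ≤ zk k := h1
    have hanti : Antitone (fun y => ENNReal.ofReal (gfun ν y)) := fun x y hxy =>
      ENNReal.ofReal_le_ofReal (gfun_anti hν0 hxy)
    have hC2 := tsum_grid_le_lintegral hanti ha hδ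
    have htsum : (∑' k : ℕ, ENNReal.ofReal (gfun ν (a + ((k:ℝ)+1)*δ))) ≠ ∞ := by
      intro htop
      rw [htop] at hC2
      rw [ENNReal.top_mul (by simp [ENNReal.ofReal_eq_zero]; linarith)] at hC2
      exact absurd (lt_of_le_of_lt hC2 hint) (lt_irrefl _)
    have hsum2 : Summable (fun k : ℕ => gfun ν (a + ((k:ℝ)+1)*δ)) := by
      have := ENNReal.summable_toReal htsum
      refine this.congr fun k => ?_
      exact ENNReal.toReal_ofReal (gfun_nonneg hν0 _)
    have hshift : Summable (fun k : ℕ => gfun ν (zk (k + (K+1)))) := by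
      refine hsum2.of_nonneg_of_le (fun k => gfun_nonneg hν0 _) (fun k => ?_)
      apply gfun_anti hν0
      have := hzk_ge (k + (K+1))
      calc a + ((k:ℝ)+1)*δ = a₀ + ((k + (K+1) : ℕ) : ℝ) * δ := by
            rw [hadef]; push_cast; ring
        _ ≤ zk (k + (K+1)) := hzk_ge _
    exact (summable_nat_add_iff (K+1)).1 hshift
  refine Summable.of_nonneg_of_le hEN0 step1 (step3.add step2)




/-- Direction: `Summable EN` implies integral finite. -/
lemma lintegral_lt_top_of_summable' (hν0 : ν (Iio 0) = 0)
    (b : ℕ → ℕ) (b₂ c₂ : ℝ) (hb₂ : 0 < b₂) (hc₂ : 1 < c₂)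
    (hgrow₂ : ∀ k : ℕ, (b (k+1) : ℝ) ≤ Real.exp (b₂ * c₂ ^ (k+1)))
    (hb2 : ∀ k : ℕ, (2:ℝ) ≤ (b (k+1) : ℝ))
    (EN : ℕ → ℝ) (hEN0 : ∀ k, 0 ≤ EN k)
    (hLo : ∀ k (s : ℝ), 0 ≤ s →
      min s 1 * (1 - (ν (Iic s)).toReal) ^ (b (k+1)) ≤ EN k)
    (hsum : Summable EN) :
    (∫⁻ y in Ici (0:ℝ), ENNReal.ofReal (gfun ν y)) < ⊤ := by
  have hδ : 0 < Real.log c₂ := Real.log_pos hc₂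
  set δ := Real.log c₂ with hδdef
  have hbpos' : ∀ k, (0:ℝ) < b (k+1) := fun k => lt_of_lt_of_le (by norm_num) (hb2 k)
  have hlogbpos : ∀ k, 0 < Real.log (b (k+1)) := fun k =>
    Real.log_pos (lt_of_lt_of_le one_lt_two (hb2 k))
  set wk : ℕ → ℝ := fun k => Real.log (2 * Real.log (b (k+1))) with hwkdef
  have hexpwk : ∀ k, Real.exp (wk k) = 2 * Real.log (b (k+1)) := fun k =>
    Real.exp_log (mul_pos two_pos (hlogbpos k))
  -- b * q' = 1/b ≤ 1/2
  have hbq : ∀ k, (b (k+1) : ℝ) * Real.exp (-Real.exp (wk k)) ≤ 2⁻¹ := by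
    intro k
    rw [hexpwk]
    have h1 : (b (k+1) : ℝ) * Real.exp (-(2 * Real.log (b (k+1)))) =
        Real.exp (-(Real.log (b (k+1)))) := by
      calc (b (k+1) : ℝ) * Real.exp (-(2 * Real.log (b (k+1))))
          = Real.exp (Real.log (b (k+1))) * Real.exp (-(2 * Real.log (b (k+1)))) := by
            rw [Real.exp_log (hbpos' k)]
        _ = Real.exp (Real.log (b (k+1)) + -(2 * Real.log (b (k+1)))) := (Real.exp_add _ _).symm
        _ = Real.exp (-(Real.log (b (k+1)))) := by ring_nf
    rw [h1, Real.exp_neg, Real.exp_log (hbpos' k)]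
    rw [inv_le_inv₀ (hbpos' k) (by norm_num)]
    exact hb2 k
  -- Step L1 : min (g (wk k)) 1 ≤ 2 * EN k
  have stepL1 : ∀ k, min (gfun ν (wk k)) 1 ≤ 2 * EN k := by
    intro k
    refine le_of_forall_pos_le_add fun ε hε => ?_
    set t := gfun ν (wk k) with htdef
    rcases le_or_gt t ε with h | h
    · have : min t 1 ≤ t := min_le_left _ _
      have h2 : 0 ≤ 2 * EN k := by have := hEN0 k; linarith
      linarith
    · set s := t - ε with hsdef
      have hs0 : 0 ≤ s := by
        have := gfun_nonneg hν0 (wk k)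
        rw [hsdef]; linarith
      have hFlt : (ν (Iic s)).toReal < Real.exp (-Real.exp (wk k)) := by
        apply F_lt_of_lt_Finv hν0 (q_pos _)
        rw [hsdef, htdef]
        show t - ε < Finv ν _
        have : Finv ν (Real.exp (-Real.exp (wk k))) = t := rfl
        rw [this]; linarith
      set q := Real.exp (-Real.exp (wk k)) with hqdef
      have hq1 : q ≤ 1 := (q_lt_one _).le
      have hber : 1 - (b (k+1) : ℝ) * q ≤ (1 - q) ^ (b (k+1)) := by
        have := one_add_mul_le_pow (by linarith : (-2:ℝ) ≤ -q) (b (k+1))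
        calc 1 - (b (k+1):ℝ) * q = 1 + (b (k+1):ℝ) * (-q) := by ring
          _ ≤ (1 + -q) ^ (b (k+1)) := this
          _ = (1 - q) ^ (b (k+1)) := by ring_nf
      have hpow2 : (1 - q) ^ (b (k+1)) ≤ (1 - (ν (Iic s)).toReal) ^ (b (k+1)) :=
        pow_le_pow_left₀ (by linarith) (by linarith) _
      have hhalf : (2⁻¹ : ℝ) ≤ (1 - (ν (Iic s)).toReal) ^ (b (k+1)) := by
        have := hbq k
        rw [← hqdef] at this
        linarith
      have hmin0 : 0 ≤ min s 1 := le_min hs0 zero_le_one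
      have h3 : min s 1 * 2⁻¹ ≤ EN k := by
        calc min s 1 * 2⁻¹ ≤ min s 1 * (1 - (ν (Iic s)).toReal) ^ (b (k+1)) :=
              mul_le_mul_of_nonneg_left hhalf hmin0
          _ ≤ EN k := hLo k s hs0
      have h4 : min s 1 ≤ 2 * EN k := by linarith
      have h5 : min t 1 ≤ min s 1 + ε := by
        rcases le_or_gt s 1 with hs1 | hs1
        · have : min s 1 = s := min_eq_left hs1
          rw [this]
          have : min t 1 ≤ t := min_le_left _ _
          rw [hsdef]; linarith
        · have h6 : min s 1 = 1 := min_eq_right hs1.le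
          rw [h6]
          have : min t 1 ≤ 1 := min_le_right _ _
          linarith
      linarith
  -- Step L2 : summability of min (g (wk k)) 1
  have stepL2 : Summable (fun k => min (gfun ν (wk k)) 1) :=
    (hsum.mul_left 2).of_nonneg_of_le
      (fun k => le_min (gfun_nonneg hν0 _) zero_le_one) stepL1
  -- Step L3 : wk k ≤ A + k * δ
  set A := max (Real.log (2*b₂) + δ) 0 with hAdef
  have hA0 : 0 ≤ A := le_max_right _ _
  have stepL3 : ∀ k : ℕ, wk k ≤ A + k * δ := by
    intro k
    have hlogb2 : Real.log (b (k+1)) ≤ b₂ * c₂ ^ (k+1) := by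
      have := Real.log_le_log (hbpos' k) (hgrow₂ k)
      rwa [Real.log_exp] at this
    have h1 : wk k ≤ Real.log (2 * (b₂ * c₂ ^ (k+1))) := by
      apply Real.log_le_log (mul_pos two_pos (hlogbpos k))
      nlinarith [hlogbpos k]
    have h2 : Real.log (2 * (b₂ * c₂ ^ (k+1))) = Real.log (2*b₂) + ((k:ℝ)+1) * δ := by
      rw [show 2 * (b₂ * c₂ ^ (k+1)) = (2*b₂) * c₂ ^ (k+1) by ring,
        Real.log_mul (by positivity) (by positivity), Real.log_pow, hδdef]
      push_cast; ring
    rw [h2] at h1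
    have h3 : Real.log (2*b₂) + ((k:ℝ)+1) * δ ≤ A + k * δ := by
      have : Real.log (2*b₂) + δ ≤ A := le_max_left _ _
      linarith [this]
    linarith
  -- Step L4/L5 : summability on the grid
  have stepL5 : Summable (fun k : ℕ => gfun ν (A + k * δ)) := by
    refine (summable_iff_summable_min_one (fun k => gfun_nonneg hν0 _)).2 ?_
    refine stepL2.of_nonneg_of_le
      (fun k => le_min (gfun_nonneg hν0 _) zero_le_one) (fun k => ?_)
    exact min_le_min (gfun_anti hν0 (stepL3 k)) le_rfl
  -- conclude via the grid lemma
  have hanti : Antitone (fun y => ENNReal.ofReal (gfun ν y)) := fun x y hxy =>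
    ENNReal.ofReal_le_ofReal (gfun_anti hν0 hxy)
  refine lintegral_lt_top_of_summable_grid hanti ENNReal.ofReal_ne_top hA0 hδ ?_
  rw [← ENNReal.ofReal_tsum_of_nonneg (fun k => gfun_nonneg hν0 _) stepL5]
  exact ENNReal.ofReal_ne_top

lemma Ioi_toReal (ν : Measure ℝ) [IsProbabilityMeasure ν] (s : ℝ) :
    (ν (Ioi s)).toReal = 1 - (ν (Iic s)).toReal := by
  have hle : ν (Iic s) ≤ 1 := le_trans (measure_mono (subset_univ _)) (le_of_eq measure_univ)
  have hcompl : ν (Ioi s) = 1 - ν (Iic s) := by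
    rw [← Set.compl_Iic, measure_compl measurableSet_Iic (measure_ne_top _ _), measure_univ]
  rw [hcompl, ENNReal.toReal_sub_of_le hle ENNReal.one_ne_top, ENNReal.toReal_one]

lemma core {Ω : Type*} [MeasurableSpace Ω] (μ : Measure Ω) [IsProbabilityMeasure μ]
    (ν : Measure ℝ) [IsProbabilityMeasure ν] (hν0 : ν (Iio 0) = 0)
    (b : ℕ → ℕ)
    (M : ℕ → Ω → ℝ) (hMmeas : ∀ k, Measurable (M k)) (hMnonneg : ∀ k ω, 0 ≤ M k ω)
    (htail : ∀ (k : ℕ) (s : ℝ), μ {ω | s < M k ω} = ν (Ioi s) ^ (b (k+1)))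
    (hindepProd : ∀ n : ℕ, IndepFun
      (fun ω => ∏ k ∈ Finset.range n, Real.exp (-(min (M k ω) 1)))
      (fun ω => Real.exp (-(min (M n ω) 1))) μ)
    (b₁ b₂ c₁ c₂ : ℝ) (hb₁ : 0 < b₁) (hb₂ : 0 < b₂) (hc₁ : 1 < c₁) (hc₁₂ : c₁ ≤ c₂)
    (hgrow₁ : ∀ k : ℕ, Real.exp (b₁ * c₁ ^ (k+1)) ≤ (b (k+1) : ℝ))
    (hgrow₂ : ∀ k : ℕ, (b (k+1) : ℝ) ≤ Real.exp (b₂ * c₂ ^ (k+1))) :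
    (∀ᵐ ω ∂μ, Summable fun k => M k ω) ↔
      (∫⁻ y in Ici (0:ℝ), ENNReal.ofReal (gfun ν y)) < ⊤ := by
  -- notation
  set N : ℕ → Ω → ℝ := fun k ω => min (M k ω) 1 with hNdef
  have hNmeas : ∀ k, Measurable (N k) := fun k => (hMmeas k).min measurable_const
  have hNnonneg : ∀ k ω, 0 ≤ N k ω := fun k ω => le_min (hMnonneg k ω) zero_le_one
  have hNle1 : ∀ k ω, N k ω ≤ 1 := fun k ω => min_le_right _ _
  have hNint : ∀ k, Integrable (N k) μ := by
    intro k
    refine (integrable_const (1:ℝ)).mono' (hNmeas k).aestronglyMeasurable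
      (ae_of_all _ fun ω => ?_)
    rw [Real.norm_eq_abs, abs_of_nonneg (hNnonneg k ω)]
    exact hNle1 k ω
  set EN : ℕ → ℝ := fun k => ∫ ω, N k ω ∂μ with hENdef
  have hEN0 : ∀ k, 0 ≤ EN k := fun k => integral_nonneg (fun ω => hNnonneg k ω)
  -- b basics
  have hb2 : ∀ k : ℕ, (2:ℝ) ≤ (b (k+1) : ℝ) := by
    intro k
    have h1 : (1:ℝ) < (b (k+1) : ℝ) := by
      calc (1:ℝ) = Real.exp 0 := Real.exp_zero.symm
        _ < Real.exp (b₁ * c₁ ^ (k+1)) :=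
            Real.exp_lt_exp.2 (mul_pos hb₁ (pow_pos (lt_trans one_pos hc₁) _))
        _ ≤ (b (k+1) : ℝ) := hgrow₁ k
    have h2 : 1 < b (k+1) := by exact_mod_cast h1
    have h3 : 2 ≤ b (k+1) := h2
    exact_mod_cast h3
  -- real tail law
  have hsetm : ∀ (k : ℕ) (s : ℝ), MeasurableSet {ω | s < M k ω} := fun k s =>
    measurableSet_lt measurable_const (hMmeas k)
  have htailR : ∀ (k : ℕ) (s : ℝ),
      (μ {ω | s < M k ω}).toReal = (1 - (ν (Iic s)).toReal) ^ (b (k+1)) := by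
    intro k s
    rw [htail k s, ENNReal.toReal_pow, Ioi_toReal]
  -- upper bound on EN
  have hU : ∀ (k : ℕ) (s : ℝ), 0 ≤ s → EN k ≤ s + (1 - (ν (Iic s)).toReal) ^ (b (k+1)) := by
    intro k s hs
    rw [← htailR k s]
    have hptw : ∀ ω, N k ω ≤ s + Set.indicator {ω | s < M k ω} (fun _ => (1:ℝ)) ω := by
      intro ω
      by_cases hω : ω ∈ {ω | s < M k ω}
      · rw [Set.indicator_of_mem hω]
        have := hNle1 k ω; linarith
      · rw [Set.indicator_of_notMem hω]
        have hMle : M k ω ≤ s := not_lt.1 hω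
        have : N k ω ≤ M k ω := min_le_left _ _
        simp only [add_zero]; linarith
    calc EN k ≤ ∫ ω, (s + Set.indicator {ω | s < M k ω} (fun _ => (1:ℝ)) ω) ∂μ :=
          integral_mono (hNint k)
            ((integrable_const s).add ((integrable_const (1:ℝ)).indicator (hsetm k s))) hptw
      _ = s + (μ {ω | s < M k ω}).toReal := by
          rw [integral_add (integrable_const s) ((integrable_const (1:ℝ)).indicator (hsetm k s)),
            integral_const, integral_indicator_const _ (hsetm k s)]
          simp [measure_univ, measureReal_def]
  -- lower bound on EN
  have hLo : ∀ (k : ℕ) (s : ℝ), 0 ≤ s →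
      min s 1 * (1 - (ν (Iic s)).toReal) ^ (b (k+1)) ≤ EN k := by
    intro k s hs
    rw [← htailR k s]
    have hptw : ∀ ω, Set.indicator {ω | s < M k ω} (fun _ => min s 1) ω ≤ N k ω := by
      intro ω
      by_cases hω : ω ∈ {ω | s < M k ω}
      · rw [Set.indicator_of_mem hω]
        exact min_le_min (le_of_lt hω) le_rfl
      · rw [Set.indicator_of_notMem hω]
        exact hNnonneg k ω
    calc min s 1 * (μ {ω | s < M k ω}).toReal
        = ∫ ω, Set.indicator {ω | s < M k ω} (fun _ => min s 1) ω ∂μ := by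
          rw [integral_indicator_const _ (hsetm k s)]
          simp [smul_eq_mul, mul_comm, measureReal_def]
      _ ≤ EN k := integral_mono ((integrable_const _).indicator (hsetm k s)) (hNint k) hptw
  -- product formula
  have hexpmeas : ∀ k, Measurable fun ω => Real.exp (-(N k ω)) := fun k =>
    Real.measurable_exp.comp ((hNmeas k).neg)
  have hexpnn : ∀ k ω, (0:ℝ) ≤ Real.exp (-(N k ω)) := fun k ω => (Real.exp_pos _).le
  have hexpint : ∀ k, Integrable (fun ω => Real.exp (-(N k ω))) μ := by
    intro k
    refine (integrable_const (1:ℝ)).mono' (hexpmeas k).aestronglyMeasurable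
      (ae_of_all _ fun ω => ?_)
    rw [Real.norm_eq_abs, abs_of_nonneg (hexpnn k ω)]
    calc Real.exp (-(N k ω)) ≤ Real.exp 0 :=
          Real.exp_le_exp.2 (neg_nonpos.2 (hNnonneg k ω))
      _ = 1 := Real.exp_zero
  have hXmeas : ∀ n, Measurable fun ω => ∏ k ∈ Finset.range n, Real.exp (-(N k ω)) :=
    fun n => Finset.measurable_prod _ (fun k _ => hexpmeas k)
  have hXnn : ∀ n ω, (0:ℝ) ≤ ∏ k ∈ Finset.range n, Real.exp (-(N k ω)) :=
    fun n ω => Finset.prod_nonneg fun k _ => hexpnn k ω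
  have hXle1 : ∀ n ω, (∏ k ∈ Finset.range n, Real.exp (-(N k ω))) ≤ 1 := by
    intro n ω
    apply Finset.prod_le_one (fun k _ => hexpnn k ω)
    intro k _
    calc Real.exp (-(N k ω)) ≤ Real.exp 0 :=
          Real.exp_le_exp.2 (neg_nonpos.2 (hNnonneg k ω))
      _ = 1 := Real.exp_zero
  have hXint : ∀ n, Integrable (fun ω => ∏ k ∈ Finset.range n, Real.exp (-(N k ω))) μ := by
    intro n
    refine (integrable_const (1:ℝ)).mono' (hXmeas n).aestronglyMeasurable
      (ae_of_all _ fun ω => ?_)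
    rw [Real.norm_eq_abs, abs_of_nonneg (hXnn n ω)]
    exact hXle1 n ω
  have hEProd : ∀ n : ℕ, ∫ ω, ∏ k ∈ Finset.range n, Real.exp (-(N k ω)) ∂μ
      = ∏ k ∈ Finset.range n, ∫ ω, Real.exp (-(N k ω)) ∂μ := by
    intro n
    induction n with
    | zero => simp
    | succ n ih =>
      have hmul := (hindepProd n).integral_fun_mul_eq_mul_integral
        (hXmeas n).aestronglyMeasurable (hexpmeas n).aestronglyMeasurable
      calc ∫ ω, ∏ k ∈ Finset.range (n+1), Real.exp (-(N k ω)) ∂μ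
          = ∫ ω, (∏ k ∈ Finset.range n, Real.exp (-(N k ω))) * Real.exp (-(N n ω)) ∂μ := by
            congr 1; funext ω; exact Finset.prod_range_succ _ n
        _ = (∫ ω, ∏ k ∈ Finset.range n, Real.exp (-(N k ω)) ∂μ)
              * ∫ ω, Real.exp (-(N n ω)) ∂μ := hmul
        _ = ∏ k ∈ Finset.range (n+1), ∫ ω, Real.exp (-(N k ω)) ∂μ := by
            rw [ih, Finset.prod_range_succ]
  -- direction A : a.s. summable → Summable EN
  have dirA : (∀ᵐ ω ∂μ, Summable fun k => M k ω) → Summable EN := by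
    intro hae
    by_contra hns
    have hdiv := (not_summable_iff_tendsto_nat_atTop_of_nonneg hEN0).1 hns
    set Aset : ℕ → Set Ω := fun c => {ω | ∀ n, ∑ k ∈ Finset.range n, N k ω ≤ c} with hAdef
    have hAmeas : ∀ c, MeasurableSet (Aset c) := by
      intro c
      have hrw : Aset c = ⋂ n, {ω | ∑ k ∈ Finset.range n, N k ω ≤ c} := by
        ext ω; simp [hAdef, mem_iInter]
      rw [hrw]
      exact MeasurableSet.iInter fun n =>
        measurableSet_le (Finset.measurable_sum _ fun k _ => hNmeas k) measurable_const
    have hcover : ∀ᵐ ω ∂μ, ω ∈ ⋃ c : ℕ, Aset c := by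
      filter_upwards [hae] with ω hω
      have hsumN : Summable fun k => N k ω :=
        hω.of_nonneg_of_le (fun k => hNnonneg k ω) (fun k => min_le_left _ _)
      refine mem_iUnion.2 ⟨⌈∑' k, N k ω⌉₊, fun n => ?_⟩
      calc ∑ k ∈ Finset.range n, N k ω ≤ ∑' k, N k ω :=
            hsumN.sum_le_tsum _ (fun k _ => hNnonneg k ω)
        _ ≤ ⌈∑' k, N k ω⌉₊ := Nat.le_ceil _
    have hex : ∃ c : ℕ, 0 < μ (Aset c) := by
      by_contra hno
      push_neg at hno
      have h0 : μ (⋃ c : ℕ, Aset c) = 0 :=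
        measure_iUnion_null fun c => le_antisymm (hno c) bot_le
      rw [ae_iff] at hcover
      have huniv : μ (univ : Set Ω) ≤ μ (⋃ c : ℕ, Aset c) + μ {ω | ¬ ω ∈ ⋃ c : ℕ, Aset c} := by
        refine le_trans (measure_mono ?_) (measure_union_le _ _)
        intro ω _
        by_cases h : ω ∈ ⋃ c : ℕ, Aset c
        · exact Or.inl h
        · exact Or.inr h
      rw [h0, hcover, measure_univ] at huniv
      simp at huniv
    obtain ⟨c, hc⟩ := hex
    set ε := Real.exp (-(c:ℝ)) * (μ (Aset c)).toReal with hεdef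
    have hε : 0 < ε :=
      mul_pos (Real.exp_pos _) (ENNReal.toReal_pos hc.ne' (measure_ne_top μ _))
    have hprodexp : ∀ (n : ℕ) (ω : Ω), ∏ k ∈ Finset.range n, Real.exp (-(N k ω))
        = Real.exp (-(∑ k ∈ Finset.range n, N k ω)) := by
      intro n ω
      rw [← Real.exp_sum]
      congr 1
      rw [Finset.sum_neg_distrib]
    have hlbn : ∀ n, ε ≤ ∫ ω, ∏ k ∈ Finset.range n, Real.exp (-(N k ω)) ∂μ := by
      intro n
      have hind : ∫ ω, Set.indicator (Aset c) (fun _ => Real.exp (-(c:ℝ))) ω ∂μ = ε := by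
        rw [integral_indicator_const _ (hAmeas c), hεdef, smul_eq_mul, mul_comm, measureReal_def]
      rw [← hind]
      refine integral_mono ((integrable_const _).indicator (hAmeas c)) (hXint n) fun ω => ?_
      by_cases hω : ω ∈ Aset c
      · rw [Set.indicator_of_mem hω, hprodexp]
        exact Real.exp_le_exp.2 (neg_le_neg (hω n))
      · rw [Set.indicator_of_notMem hω]
        exact hXnn n ω
    set c' := 1 - Real.exp (-1) with hc'def
    have hc' : 0 < c' := by
      have h1 : Real.exp (-1) < 1 := Real.exp_lt_one_iff.2 (by norm_num)
      rw [hc'def]; linarith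
    have hubn : ∀ n, ∫ ω, ∏ k ∈ Finset.range n, Real.exp (-(N k ω)) ∂μ
        ≤ Real.exp (-(c' * ∑ k ∈ Finset.range n, EN k)) := by
      intro n
      rw [hEProd n]
      have hak0 : ∀ k, 0 ≤ ∫ ω, Real.exp (-(N k ω)) ∂μ :=
        fun k => integral_nonneg fun ω => hexpnn k ω
      have hak : ∀ k, ∫ ω, Real.exp (-(N k ω)) ∂μ ≤ Real.exp (-(c' * EN k)) := by
        intro k
        have h1 : ∫ ω, Real.exp (-(N k ω)) ∂μ ≤ 1 - c' * EN k := by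
          have hmono := integral_mono (hexpint k)
            ((integrable_const (1:ℝ)).sub ((hNint k).const_mul c'))
            (fun ω => by
              have := exp_neg_le (N k ω) (hNnonneg k ω) (hNle1 k ω)
              simpa [hc'def] using this)
          calc ∫ ω, Real.exp (-(N k ω)) ∂μ ≤ ∫ ω, (1 - c' * N k ω) ∂μ := hmono
            _ = 1 - c' * EN k := by
                rw [integral_sub (integrable_const 1) ((hNint k).const_mul c'),
                  integral_const, integral_const_mul]
                simp [measure_univ, measureReal_def, hENdef]
        have h2 : 1 - c' * EN k ≤ Real.exp (-(c' * EN k)) := by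
          have := Real.add_one_le_exp (-(c' * EN k)); linarith
        linarith
      calc ∏ k ∈ Finset.range n, ∫ ω, Real.exp (-(N k ω)) ∂μ
          ≤ ∏ k ∈ Finset.range n, Real.exp (-(c' * EN k)) :=
            Finset.prod_le_prod (fun k _ => hak0 k) (fun k _ => hak k)
        _ = Real.exp (∑ k ∈ Finset.range n, -(c' * EN k)) := (Real.exp_sum _ _).symm
        _ = Real.exp (-(c' * ∑ k ∈ Finset.range n, EN k)) := by
            congr 1
            rw [Finset.sum_neg_distrib, Finset.mul_sum]
    have htend : Tendsto (fun n => Real.exp (-(c' * ∑ k ∈ Finset.range n, EN k)))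
        atTop (𝓝 0) := by
      apply Real.tendsto_exp_atBot.comp
      have h1 : Tendsto (fun n => c' * ∑ k ∈ Finset.range n, EN k) atTop atTop :=
        hdiv.const_mul_atTop hc'
      exact tendsto_neg_atTop_atBot.comp h1
    obtain ⟨n, hn⟩ := (htend.eventually (eventually_lt_nhds hε)).exists
    exact absurd (le_trans (hlbn n) (hubn n)) (not_le.2 hn)
  -- direction B : Summable EN → a.s. summable
  have dirB : Summable EN → (∀ᵐ ω ∂μ, Summable fun k => M k ω) := by
    intro hsum
    have h1 : ∀ k, ∫⁻ ω, ENNReal.ofReal (N k ω) ∂μ = ENNReal.ofReal (EN k) := fun k =>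
      (ofReal_integral_eq_lintegral_ofReal (hNint k) (ae_of_all _ fun ω => hNnonneg k ω)).symm
    have h2 : ∫⁻ ω, ∑' k, ENNReal.ofReal (N k ω) ∂μ ≠ ∞ := by
      rw [lintegral_tsum (fun k => ((hNmeas k).ennreal_ofReal).aemeasurable)]
      simp_rw [h1]
      rw [← ENNReal.ofReal_tsum_of_nonneg hEN0 hsum]
      exact ENNReal.ofReal_ne_top
    have h3 : ∀ᵐ ω ∂μ, (∑' k, ENNReal.ofReal (N k ω)) < ∞ :=
      ae_lt_top (Measurable.ennreal_tsum fun k => (hNmeas k).ennreal_ofReal) h2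
    filter_upwards [h3] with ω hω
    have hsumN : Summable fun k => N k ω := by
      have := ENNReal.summable_toReal hω.ne
      exact this.congr fun k => ENNReal.toReal_ofReal (hNnonneg k ω)
    exact (summable_iff_summable_min_one (fun k => hMnonneg k ω)).2 hsumN
  -- glue
  constructor
  · intro hae
    exact lintegral_lt_top_of_summable' hν0 b b₂ c₂ hb₂ (lt_of_lt_of_le hc₁ hc₁₂)
      hgrow₂ hb2 EN hEN0 hLo (dirA hae)
  · intro hint
    exact dirB (summable_of_lintegral_lt_top hν0 b b₁ c₁ hb₁ hc₁ hgrow₁ EN hEN0 hU hint)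

end Stmt19Aux

open Stmt19Aux in
/-- **Explosive criterion (Claim 5.3 + Lemma 5.4).** For i.i.d. nonnegative
`(L_{k,j})` with common law `ν` (CDF `F(t) = ν(-∞,t]`, generalized inverse
`F^{(-1)}(q) = inf{t : F(t) ≥ q}`) and positive integers `(b_k)_{k ≥ 1}` growing
double-exponentially, `∑_{k ≥ 1} min_{1 ≤ j ≤ b_k} L_{k,j} < ∞` almost surely iff
`∫_0^∞ F^{(-1)}(exp(-e^y)) dy < ∞`. -/
theorem stmt19 {Ω : Type*} [MeasurableSpace Ω] (μ : Measure Ω) [IsProbabilityMeasure μ]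
    (L : ℕ → ℕ → Ω → ℝ) (hmeas : ∀ k j, Measurable (L k j))
    (hnonneg : ∀ k j ω, 0 ≤ L k j ω)
    (hindep : iIndepFun (fun p : ℕ × ℕ => L p.1 p.2) μ)
    (ν : Measure ℝ) [IsProbabilityMeasure ν]
    (hid : ∀ k j, Measure.map (L k j) μ = ν)
    (b : ℕ → ℕ) (hbpos : ∀ k, 0 < b k)
    (b₁ b₂ c₁ c₂ : ℝ) (hb₁ : 0 < b₁) (hb₂ : 0 < b₂) (hc₁ : 1 < c₁) (hc₁₂ : c₁ ≤ c₂)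
    (hgrow : ∀ k : ℕ, 1 ≤ k →
      Real.exp (b₁ * c₁ ^ k) ≤ (b k : ℝ) ∧ (b k : ℝ) ≤ Real.exp (b₂ * c₂ ^ k)) :
    (∀ᵐ ω ∂μ, Summable (fun k : ℕ =>
        (Finset.Icc 1 (b (k + 1))).inf' (Finset.nonempty_Icc.mpr (hbpos (k + 1)))
          (fun j => L (k + 1) j ω))) ↔
      (∫⁻ y in Set.Ici (0 : ℝ), ENNReal.ofReal
          (sInf {t : ℝ | Real.exp (-Real.exp y) ≤ (ν (Set.Iic t)).toReal})) < ⊤ := by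
  classical
  have hν0 : ν (Iio 0) = 0 := by
    rw [← hid 0 0, Measure.map_apply (hmeas 0 0) measurableSet_Iio]
    have hempty : (L 0 0) ⁻¹' (Iio 0) = ∅ := by
      ext ω
      simp only [mem_preimage, mem_Iio, mem_empty_iff_false, iff_false, not_lt]
      exact hnonneg 0 0 ω
    rw [hempty, measure_empty]
  have hMmeas : ∀ k : ℕ, Measurable fun ω => (Finset.Icc 1 (b (k+1))).inf'
      (Finset.nonempty_Icc.mpr (hbpos (k+1))) (fun j => L (k+1) j ω) :=
    fun k => measurable_finset_inf' _ _ _ (fun j => hmeas (k+1) j)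
  have hMnonneg : ∀ (k : ℕ) (ω : Ω), 0 ≤ (Finset.Icc 1 (b (k+1))).inf'
      (Finset.nonempty_Icc.mpr (hbpos (k+1))) (fun j => L (k+1) j ω) :=
    fun k ω => Finset.le_inf' _ _ (fun j _ => hnonneg (k+1) j ω)
  -- tail law
  have htail : ∀ (k : ℕ) (s : ℝ),
      μ {ω | s < (Finset.Icc 1 (b (k+1))).inf' (Finset.nonempty_Icc.mpr (hbpos (k+1)))
        (fun j => L (k+1) j ω)} = ν (Ioi s) ^ (b (k+1)) := by
    intro k s
    have hset : {ω | s < (Finset.Icc 1 (b (k+1))).inf' (Finset.nonempty_Icc.mpr (hbpos (k+1)))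
          (fun j => L (k+1) j ω)}
        = ⋂ p ∈ (({k+1} : Finset ℕ) ×ˢ Finset.Icc 1 (b (k+1))),
            (fun p : ℕ × ℕ => L p.1 p.2) p ⁻¹' (Ioi s) := by
      ext ω
      simp only [mem_setOf_eq, Finset.lt_inf'_iff, Set.mem_iInter, Set.mem_preimage, mem_Ioi,
        Finset.mem_product, Finset.mem_singleton]
      constructor
      · rintro h p ⟨hp1, hp2⟩
        rw [hp1]
        exact h p.2 hp2
      · intro h j hj
        exact h (k+1, j) ⟨rfl, hj⟩
    have hmul := hindep.measure_inter_preimage_eq_mul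
      (({k+1} : Finset ℕ) ×ˢ Finset.Icc 1 (b (k+1)))
      (sets := fun _ => Ioi s) (fun p _ => measurableSet_Ioi)
    rw [hset, hmul]
    have hfac : ∀ p ∈ (({k+1} : Finset ℕ) ×ˢ Finset.Icc 1 (b (k+1))),
        μ ((fun p : ℕ × ℕ => L p.1 p.2) p ⁻¹' Ioi s) = ν (Ioi s) := by
      intro p _
      rw [← hid p.1 p.2, Measure.map_apply (hmeas p.1 p.2) measurableSet_Ioi]
    rw [Finset.prod_congr rfl hfac, Finset.prod_const, Finset.card_product,
      Finset.card_singleton, Nat.card_Icc, one_mul, Nat.add_sub_cancel]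
  -- independence of the product and the next factor
  have hindepProd : ∀ n : ℕ, IndepFun
      (fun ω => ∏ k ∈ Finset.range n, Real.exp (-(min ((Finset.Icc 1 (b (k+1))).inf'
        (Finset.nonempty_Icc.mpr (hbpos (k+1))) (fun j => L (k+1) j ω)) 1)))
      (fun ω => Real.exp (-(min ((Finset.Icc 1 (b (n+1))).inf'
        (Finset.nonempty_Icc.mpr (hbpos (n+1))) (fun j => L (n+1) j ω)) 1))) μ := by
    intro n
    set blk : ℕ → Finset (ℕ × ℕ) := fun k => ({k+1} : Finset ℕ) ×ˢ Finset.Icc 1 (b (k+1))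
      with hblkdef
    have hblk1 : ∀ k p, p ∈ blk k → p.1 = k+1 := by
      intro k p hp
      exact Finset.mem_singleton.1 (Finset.mem_product.1 hp).1
    have hblkmem : ∀ k j, j ∈ Finset.Icc 1 (b (k+1)) → ((k+1, j) : ℕ × ℕ) ∈ blk k := by
      intro k j hj
      exact Finset.mem_product.2 ⟨Finset.mem_singleton_self _, hj⟩
    set Sn : Finset (ℕ × ℕ) := (Finset.range n).biUnion blk with hSndef
    have hdisj : Disjoint Sn (blk n) := by
      rw [Finset.disjoint_left]
      intro p hpS hpT
      obtain ⟨k, hk, hpk⟩ := Finset.mem_biUnion.1 hpS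
      have h1 := hblk1 k p hpk
      have h2 := hblk1 n p hpT
      have := Finset.mem_range.1 hk
      omega
    have base := hindep.indepFun_finset Sn (blk n) hdisj (fun p => hmeas p.1 p.2)
    set φ : ({x // x ∈ Sn} → ℝ) → ℝ := fun v => ∏ k ∈ Finset.range n,
      Real.exp (-(min ((Finset.Icc 1 (b (k+1))).inf' (Finset.nonempty_Icc.mpr (hbpos (k+1)))
        (fun j => if hp : ((k+1, j) : ℕ × ℕ) ∈ Sn then v ⟨(k+1, j), hp⟩ else 0)) 1)) with hφdef
    set ψ : ({x // x ∈ blk n} → ℝ) → ℝ := fun v =>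
      Real.exp (-(min ((Finset.Icc 1 (b (n+1))).inf' (Finset.nonempty_Icc.mpr (hbpos (n+1)))
        (fun j => if hp : ((n+1, j) : ℕ × ℕ) ∈ blk n then v ⟨(n+1, j), hp⟩ else 0)) 1)) with hψdef
    have hdite_meas : ∀ (T : Finset (ℕ × ℕ)) (p : ℕ × ℕ),
        Measurable fun v : {x // x ∈ T} → ℝ => if hp : p ∈ T then v ⟨p, hp⟩ else 0 := by
      intro T p
      by_cases hp : p ∈ T
      · simp only [dif_pos hp]
        exact measurable_pi_apply _
      · simp only [dif_neg hp]
        exact measurable_const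
    have hφmeas : Measurable φ := by
      rw [hφdef]
      refine Finset.measurable_prod _ fun k _ => ?_
      refine Real.measurable_exp.comp (Measurable.neg ?_)
      refine Measurable.min ?_ measurable_const
      exact measurable_finset_inf' _ _ _ (fun j => hdite_meas Sn (k+1, j))
    have hψmeas : Measurable ψ := by
      rw [hψdef]
      refine Real.measurable_exp.comp (Measurable.neg ?_)
      refine Measurable.min ?_ measurable_const
      exact measurable_finset_inf' _ _ _ (fun j => hdite_meas (blk n) (n+1, j))
    have hcomp := base.comp hφmeas hψmeas
    have hXeq : (fun ω => ∏ k ∈ Finset.range n,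
        Real.exp (-(min ((Finset.Icc 1 (b (k+1))).inf' (Finset.nonempty_Icc.mpr (hbpos (k+1)))
          (fun j => L (k+1) j ω)) 1)))
        = φ ∘ (fun ω (i : {x // x ∈ Sn}) => L (i : ℕ × ℕ).1 (i : ℕ × ℕ).2 ω) := by
      funext ω
      simp only [Function.comp_apply, hφdef]
      refine Finset.prod_congr rfl fun k hk => ?_
      have hinf : (Finset.Icc 1 (b (k+1))).inf' (Finset.nonempty_Icc.mpr (hbpos (k+1)))
          (fun j => L (k+1) j ω)
          = (Finset.Icc 1 (b (k+1))).inf' (Finset.nonempty_Icc.mpr (hbpos (k+1)))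
            (fun j => if hp : ((k+1, j) : ℕ × ℕ) ∈ Sn then L (k+1) j ω else 0) := by
        refine Finset.inf'_congr _ rfl fun j hj => ?_
        have hp : ((k+1, j) : ℕ × ℕ) ∈ Sn :=
          Finset.mem_biUnion.2 ⟨k, hk, hblkmem k j hj⟩
        rw [dif_pos hp]
      rw [hinf]
    have hYeq : (fun ω => Real.exp (-(min ((Finset.Icc 1 (b (n+1))).inf'
        (Finset.nonempty_Icc.mpr (hbpos (n+1))) (fun j => L (n+1) j ω)) 1)))
        = ψ ∘ (fun ω (i : {x // x ∈ blk n}) => L (i : ℕ × ℕ).1 (i : ℕ × ℕ).2 ω) := by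
      funext ω
      simp only [Function.comp_apply, hψdef]
      have hinf : (Finset.Icc 1 (b (n+1))).inf' (Finset.nonempty_Icc.mpr (hbpos (n+1)))
          (fun j => L (n+1) j ω)
          = (Finset.Icc 1 (b (n+1))).inf' (Finset.nonempty_Icc.mpr (hbpos (n+1)))
            (fun j => if hp : ((n+1, j) : ℕ × ℕ) ∈ blk n then L (n+1) j ω else 0) := by
        refine Finset.inf'_congr _ rfl fun j hj => ?_
        rw [dif_pos (hblkmem n j hj)]
      rw [hinf]
    rw [hXeq, hYeq]
    exact hcomp
  -- conclude via `core`
  have hgrow₁ : ∀ k : ℕ, Real.exp (b₁ * c₁ ^ (k+1)) ≤ (b (k+1) : ℝ) :=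
    fun k => (hgrow (k+1) (Nat.succ_le_succ (Nat.zero_le k))).1
  have hgrow₂ : ∀ k : ℕ, (b (k+1) : ℝ) ≤ Real.exp (b₂ * c₂ ^ (k+1)) :=
    fun k => (hgrow (k+1) (Nat.succ_le_succ (Nat.zero_le k))).2
  exact core μ ν hν0 b _ hMmeas hMnonneg htail hindepProd b₁ b₂ c₁ c₂ hb₁ hb₂ hc₁ hc₁₂
    hgrow₁ hgrow₂
end
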